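/- arXiv:1410.1176 — 6 statements merged into one kernel-verified Lean document; each statement's English description precedes it below -/
import Mathlib

section
/- Let N ≥ 2 and 0 < κ ≤ 1/4, and set α₊ = 1 + √(1 − 4κ). The function u(x) = x_N^{α₊/2}·|x|^{−(N + α₊ − 2)} satisfies −Δu(x) − κ·u(x)/x_N² = 0 at every point x of the open half-space ℝ^N_+ (this is the harmonicity of the Poisson kernel of the operator −Δ − κ/x_N² in the half-space with singularity at the origin). -/
open MeasureTheory

/-- The Laplacian of `f` at `x`: the sum of the (pure) second partial derivatives. -/
noncomputable def laplacian {N : ℕ} (f : EuclideanSpace ℝ (Fin N) → ℝ)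
    (x : EuclideanSpace ℝ (Fin N)) : ℝ :=
  ∑ i : Fin N,
    iteratedFDeriv ℝ 2 f x ![EuclideanSpace.single i 1, EuclideanSpace.single i 1]


open Filter Topology

private lemma coordFD {N : ℕ} (j : Fin N) (y : EuclideanSpace ℝ (Fin N)) :
    HasFDerivAt (fun z : EuclideanSpace ℝ (Fin N) => z j)
      (EuclideanSpace.proj j : EuclideanSpace ℝ (Fin N) →L[ℝ] ℝ) y :=
  (EuclideanSpace.proj j : EuclideanSpace ℝ (Fin N) →L[ℝ] ℝ).hasFDerivAt

private lemma sumsqFD {N : ℕ} (y : EuclideanSpace ℝ (Fin N)) :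
    HasFDerivAt (fun z : EuclideanSpace ℝ (Fin N) => ∑ j, z j * z j)
      (∑ j, (2 * y j) • (EuclideanSpace.proj j : EuclideanSpace ℝ (Fin N) →L[ℝ] ℝ)) y := by
  have h := HasFDerivAt.fun_sum (u := Finset.univ)
    (A := fun j (z : EuclideanSpace ℝ (Fin N)) => z j * z j)
    (A' := fun j => (y j) • (EuclideanSpace.proj j : EuclideanSpace ℝ (Fin N) →L[ℝ] ℝ)
        + (y j) • (EuclideanSpace.proj j : EuclideanSpace ℝ (Fin N) →L[ℝ] ℝ))
    (fun j _ => (coordFD j y).mul (coordFD j y))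
  refine h.congr_fderiv ?_
  ext v
  simp [ContinuousLinearMap.sum_apply]
  exact Finset.sum_congr rfl fun j _ => by ring

private lemma sumsq_pos {N : ℕ} (y : EuclideanSpace ℝ (Fin N)) (n : Fin N) (hy : 0 < y n) :
    0 < ∑ j, y j * y j := by
  have h1 : y n * y n ≤ ∑ j, y j * y j :=
    Finset.single_le_sum (f := fun j => y j * y j) (fun j _ => mul_self_nonneg _)
      (Finset.mem_univ n)
  nlinarith

private lemma key {N : ℕ} (n : Fin N) (p m : ℝ) (x : EuclideanSpace ℝ (Fin N)) (hx : 0 < x n) :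
    laplacian (fun y => (y n) ^ p * (∑ j, y j * y j) ^ m) x =
      p * (p - 1) * (x n) ^ (p - 2) * (∑ j, x j * x j) ^ m
      + 2 * m * (2 * p + 2 * m - 2 + (N : ℝ)) * (x n) ^ p * (∑ j, x j * x j) ^ (m - 1) := by
  set S : EuclideanSpace ℝ (Fin N) → ℝ := fun z => ∑ j, z j * z j with hS
  set Sd : EuclideanSpace ℝ (Fin N) → EuclideanSpace ℝ (Fin N) →L[ℝ] ℝ :=
    fun z => ∑ j, (2 * z j) • (EuclideanSpace.proj j : EuclideanSpace ℝ (Fin N) →L[ℝ] ℝ)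
    with hSd
  set g : EuclideanSpace ℝ (Fin N) → ℝ := fun y => (y n) ^ p * (S y) ^ m with hg
  set D : EuclideanSpace ℝ (Fin N) → EuclideanSpace ℝ (Fin N) →L[ℝ] ℝ := fun y =>
    ((y n) ^ p) • ((m * (S y) ^ (m-1)) • Sd y)
      + ((S y) ^ m) • ((p * (y n) ^ (p-1)) •
          (EuclideanSpace.proj n : EuclideanSpace ℝ (Fin N) →L[ℝ] ℝ)) with hD
  have hSx : 0 < S x := sumsq_pos x n hx
  have hDg : ∀ y, 0 < y n → HasFDerivAt g (D y) y := fun y hy =>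
    ((coordFD n y).rpow_const (Or.inl hy.ne')).mul
      ((sumsqFD y).rpow_const (Or.inl (sumsq_pos y n hy).ne'))
  have hev : fderiv ℝ g =ᶠ[𝓝 x] D := by
    have hc : Continuous fun y : EuclideanSpace ℝ (Fin N) => y n :=
      (EuclideanSpace.proj n : EuclideanSpace ℝ (Fin N) →L[ℝ] ℝ).continuous
    filter_upwards [(hc.tendsto x).eventually (eventually_gt_nhds hx)] with y hy
    exact (hDg y hy).fderiv
  have hDdiff : DifferentiableAt ℝ D x := by
    have d1 : DifferentiableAt ℝ (fun y : EuclideanSpace ℝ (Fin N) => (y n) ^ p) x :=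
      ((coordFD n x).differentiableAt).rpow_const (Or.inl hx.ne')
    have dS : DifferentiableAt ℝ S x := (sumsqFD x).differentiableAt
    have dSm1 : DifferentiableAt ℝ (fun y => m * (S y) ^ (m-1)) x :=
      (dS.rpow_const (Or.inl hSx.ne')).const_mul m
    have dSd : DifferentiableAt ℝ Sd x := DifferentiableAt.fun_sum fun j _ =>
      (((coordFD j x).differentiableAt).const_mul 2).smul_const _
    have dtp1 : DifferentiableAt ℝ (fun y : EuclideanSpace ℝ (Fin N) => p * (y n) ^ (p-1)) x :=
      (((coordFD n x).differentiableAt).rpow_const (Or.inl hx.ne')).const_mul p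
    exact (d1.smul (dSm1.smul dSd)).add
      ((dS.rpow_const (Or.inl hSx.ne')).smul (dtp1.smul_const _))
  have hval : ∀ i : Fin N,
      iteratedFDeriv ℝ 2 g x ![EuclideanSpace.single i 1, EuclideanSpace.single i 1] =
      4 * m * (m - 1) * (S x) ^ (m - 1 - 1) * (x n) ^ p * (x i * x i)
        + 2 * m * (S x) ^ (m - 1) * (x n) ^ p
        + (if n = i then
            4 * p * m * (x n) ^ (p - 1) * (S x) ^ (m - 1) * (x n)
              + p * (p - 1) * (x n) ^ (p - 1 - 1) * (S x) ^ m
          else 0) := by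
    intro i
    set e : EuclideanSpace ℝ (Fin N) := EuclideanSpace.single i 1 with he
    set c : ℝ := if n = i then (1:ℝ) else 0 with hc
    rw [iteratedFDeriv_two_apply]
    simp only [Matrix.cons_val_zero, Matrix.cons_val_one, Matrix.head_cons]
    have h1 : fderiv ℝ (fderiv ℝ g) x = fderiv ℝ D x := hev.fderiv_eq
    have h2 : HasFDerivAt (fun y => D y e)
        ((ContinuousLinearMap.apply ℝ ℝ e).comp (fderiv ℝ D x)) x :=
      (ContinuousLinearMap.apply ℝ ℝ e).hasFDerivAt.comp x hDdiff.hasFDerivAt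
    have h3 : fderiv ℝ D x e e = fderiv ℝ (fun y => D y e) x e := by
      rw [h2.fderiv]; simp
    have hfun : (fun y => D y e) =
        fun y => (y n) ^ p * (m * (S y) ^ (m-1) * (2 * y i))
          + (S y) ^ m * (p * (y n) ^ (p-1) * c) := by
      funext y
      simp only [hD, hSd, he, hc, ContinuousLinearMap.add_apply,
        ContinuousLinearMap.smul_apply, ContinuousLinearMap.sum_apply, smul_eq_mul,
        PiLp.proj_apply, EuclideanSpace.single_apply, mul_ite, mul_one, mul_zero,
        Finset.sum_ite_eq', Finset.mem_univ, if_true]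
    have hφ : HasFDerivAt
        (fun y : EuclideanSpace ℝ (Fin N) => (y n) ^ p * (m * (S y) ^ (m-1) * (2 * y i))
          + (S y) ^ m * (p * (y n) ^ (p-1) * c))
        ((((x n) ^ p) • (((m * (S x) ^ (m-1)) • ((2:ℝ) •
            (EuclideanSpace.proj i : EuclideanSpace ℝ (Fin N) →L[ℝ] ℝ)))
          + ((2 * x i)) • (m • (((m-1) * (S x) ^ (m-1-1)) • Sd x)))
          + ((m * (S x) ^ (m-1) * (2 * x i))) • ((p * (x n) ^ (p-1)) •
            (EuclideanSpace.proj n : EuclideanSpace ℝ (Fin N) →L[ℝ] ℝ)))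
        + (((S x) ^ m) • (c • (p • (((p-1) * (x n) ^ (p-1-1)) •
            (EuclideanSpace.proj n : EuclideanSpace ℝ (Fin N) →L[ℝ] ℝ))))
          + ((p * (x n) ^ (p-1) * c)) • ((m * (S x) ^ (m-1)) • Sd x))) x := by
      exact (((coordFD n x).rpow_const (Or.inl hx.ne')).mul
          ((((sumsqFD x).rpow_const (Or.inl hSx.ne')).const_mul m).mul
            ((coordFD i x).const_mul 2))).add
        (((sumsqFD x).rpow_const (Or.inl hSx.ne')).mul
          ((((coordFD n x).rpow_const (Or.inl hx.ne')).const_mul p).mul_const c))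
    rw [h1, h3, hfun, hφ.fderiv]
    simp only [hSd, hc, ContinuousLinearMap.add_apply, ContinuousLinearMap.smul_apply,
      ContinuousLinearMap.sum_apply, smul_eq_mul, PiLp.proj_apply, he,
      EuclideanSpace.single_apply, mul_ite, mul_one, mul_zero,
      Finset.sum_ite_eq', Finset.mem_univ, if_true]
    by_cases hni : n = i
    · subst hni; simp only [if_true]; ring
    · simp only [hni, if_false]; ring
  rw [laplacian, Finset.sum_congr rfl fun i _ => hval i, Finset.sum_add_distrib,
    Finset.sum_add_distrib, Finset.sum_ite_eq, ← Finset.mul_sum, Finset.sum_const,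
    Finset.card_univ, Fintype.card_fin]
  simp only [Finset.mem_univ, if_true, nsmul_eq_mul, ← hS]
  rw [show (∑ j, x j * x j) = S x from rfl]
  rw [show p - 2 = p - 1 - 1 by ring,
    Real.rpow_sub_one hSx.ne' (m - 1), Real.rpow_sub_one hx.ne' (p - 1),
    Real.rpow_sub_one hSx.ne' m, Real.rpow_sub_one hx.ne' p]
  field_simp
  ring

/-- the Poisson kernel `u(x) = x_N^{α₊/2} |x|^{-(N+α₊-2)}` of the Hardy
operator `-Δ - κ/x_N²` is harmonic for this operator in the half-space `{x_N > 0}`. -/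
theorem stmt_6 {N : ℕ} (hN : 2 ≤ N)
    (κ α : ℝ) (hκ0 : 0 < κ) (hκ1 : κ ≤ 1 / 4)
    (hα : α = 1 + Real.sqrt (1 - 4 * κ)) :
    ∀ x : EuclideanSpace ℝ (Fin N), 0 < x ⟨N - 1, by omega⟩ →
      -laplacian
          (fun y => (y ⟨N - 1, by omega⟩) ^ (α / 2) * ‖y‖ ^ (-((N : ℝ) + α - 2))) x
        - κ * ((x ⟨N - 1, by omega⟩) ^ (α / 2) * ‖x‖ ^ (-((N : ℝ) + α - 2)))
            / (x ⟨N - 1, by omega⟩) ^ 2 = 0 := by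
  
  intro x hx
  have hn : N - 1 < N := by omega
  set n : Fin N := ⟨N - 1, hn⟩ with hndef
  show -laplacian
          (fun y => (y n) ^ (α / 2) * ‖y‖ ^ (-((N : ℝ) + α - 2))) x
        - κ * ((x n) ^ (α / 2) * ‖x‖ ^ (-((N : ℝ) + α - 2)))
            / (x n) ^ 2 = 0
  have hx' : 0 < x n := hx
  have hfeq : ∀ y : EuclideanSpace ℝ (Fin N),
      ‖y‖ ^ (-((N : ℝ) + α - 2)) = (∑ j, y j * y j) ^ (-((N : ℝ) + α - 2) / 2) := by
    intro y
    have h0 : (0:ℝ) ≤ ∑ j, y j * y j := Finset.sum_nonneg fun j _ => mul_self_nonneg _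
    rw [EuclideanSpace.norm_eq]
    have hsum : ∑ i, ‖y i‖ ^ 2 = ∑ j, y j * y j :=
      Finset.sum_congr rfl fun j _ => by rw [Real.norm_eq_abs, sq_abs, sq]
    rw [hsum, Real.sqrt_eq_rpow, ← Real.rpow_mul h0,
      show 1 / 2 * (-((N : ℝ) + α - 2)) = -((N : ℝ) + α - 2) / 2 by ring]
  have hfun : (fun y : EuclideanSpace ℝ (Fin N) =>
        (y n) ^ (α / 2) * ‖y‖ ^ (-((N : ℝ) + α - 2)))
      = fun y => (y n) ^ (α / 2) * (∑ j, y j * y j) ^ (-((N : ℝ) + α - 2) / 2) :=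
    funext fun y => by rw [hfeq y]
  have hlap := key n (α / 2) (-((N : ℝ) + α - 2) / 2) x hx'
  rw [hfun, hfeq x, hlap]
  have hcoef : 2 * (α / 2) + 2 * (-((N : ℝ) + α - 2) / 2) - 2 + (N : ℝ) = 0 := by ring
  rw [hcoef]
  have hpp : α / 2 * (α / 2 - 1) = -κ := by
    have h1 : (α - 1) ^ 2 = 1 - 4 * κ := by
      rw [hα]
      simpa using Real.sq_sqrt (by linarith : (0:ℝ) ≤ 1 - 4 * κ)
    linear_combination h1 / 4
  rw [hpp, Real.rpow_sub hx', show (2:ℝ) = ((2:ℕ):ℝ) by norm_num, Real.rpow_natCast]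
  have hxne : x n ≠ 0 := hx'.ne'
  field_simp
  ring
end

section
/- Let N ≥ 2, 0 < κ ≤ 1/4, set α₊ = 1 + √(1 − 4κ), and let j ∈ {1, …, N−1}. The function u(x) = x_N^{α₊/2}·x_j·|x|^{−(N + α₊)} satisfies −Δu(x) − κ·u(x)/x_N² = 0 at every point x of the open half-space ℝ^N_+. -/
open MeasureTheory

namespace Stmt7

variable {N : ℕ}

noncomputable def Q (y : EuclideanSpace ℝ (Fin N)) : ℝ := ∑ i, y i * y i

noncomputable def B (y : EuclideanSpace ℝ (Fin N)) : EuclideanSpace ℝ (Fin N) →L[ℝ] ℝ :=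
  ∑ i, (2 * y i) • EuclideanSpace.proj i

lemma hasFDerivAt_coord (i : Fin N) (y : EuclideanSpace ℝ (Fin N)) :
    HasFDerivAt (fun z : EuclideanSpace ℝ (Fin N) => z i)
      (EuclideanSpace.proj (𝕜 := ℝ) i) y :=
  (EuclideanSpace.proj (𝕜 := ℝ) i).hasFDerivAt

lemma hasFDerivAt_Q (y : EuclideanSpace ℝ (Fin N)) : HasFDerivAt Q (B y) y := by
  have h : ∀ i : Fin N, HasFDerivAt (fun z : EuclideanSpace ℝ (Fin N) => z i * z i)
      ((2 * y i) • EuclideanSpace.proj (𝕜 := ℝ) i) y := by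
    intro i
    have := (hasFDerivAt_coord i y).mul (hasFDerivAt_coord i y)
    refine this.congr_fderiv ?_
    rw [two_mul, add_smul]
  exact HasFDerivAt.fun_sum (fun i _ => h i)

lemma Q_pos {n : Fin N} {y : EuclideanSpace ℝ (Fin N)} (hy : y n ≠ 0) : 0 < Q y := by
  have h1 : y n * y n ≤ Q y :=
    Finset.single_le_sum (f := fun i => y i * y i) (fun i _ => mul_self_nonneg _)
      (Finset.mem_univ n)
  have h2 : 0 < y n * y n := mul_self_pos.mpr hy
  linarith

lemma Q_eq_norm (y : EuclideanSpace ℝ (Fin N)) : Q y = ‖y‖ ^ 2 := by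
  rw [EuclideanSpace.norm_eq, Real.sq_sqrt (by positivity)]
  simp [Q, sq]

noncomputable def F3 (n j : Fin N) (p r : ℝ) (y : EuclideanSpace ℝ (Fin N)) : ℝ :=
  (y n) ^ p * y j * Q y ^ r

noncomputable def F2 (n : Fin N) (p r : ℝ) (y : EuclideanSpace ℝ (Fin N)) : ℝ :=
  (y n) ^ p * Q y ^ r

noncomputable def D3 (n j : Fin N) (p r : ℝ) (y : EuclideanSpace ℝ (Fin N)) :
    EuclideanSpace ℝ (Fin N) →L[ℝ] ℝ :=
  (p * F3 n j (p - 1) r y) • EuclideanSpace.proj n + F2 n p r y • EuclideanSpace.proj j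
    + (r * F3 n j p (r - 1) y) • B y

noncomputable def D2 (n : Fin N) (p r : ℝ) (y : EuclideanSpace ℝ (Fin N)) :
    EuclideanSpace ℝ (Fin N) →L[ℝ] ℝ :=
  (p * F2 n (p - 1) r y) • EuclideanSpace.proj n + (r * F2 n p (r - 1) y) • B y

lemma hasFDerivAt_rpow_coord (i : Fin N) (p : ℝ) {y : EuclideanSpace ℝ (Fin N)}
    (hy : y i ≠ 0) :
    HasFDerivAt (fun z : EuclideanSpace ℝ (Fin N) => (z i) ^ p)
      ((p * (y i) ^ (p - 1)) • EuclideanSpace.proj (𝕜 := ℝ) i) y :=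
  by have := (Real.hasDerivAt_rpow_const (p := p) (Or.inl hy)).comp_hasFDerivAt y (hasFDerivAt_coord i y); exact this

lemma hasFDerivAt_Qr (r : ℝ) {y : EuclideanSpace ℝ (Fin N)} (h : Q y ≠ 0) :
    HasFDerivAt (fun z : EuclideanSpace ℝ (Fin N) => Q z ^ r)
      ((r * Q y ^ (r - 1)) • B y) y :=
  (Real.hasDerivAt_rpow_const (Or.inl h)).comp_hasFDerivAt y (hasFDerivAt_Q y)

lemma M3 (n j : Fin N) (p r : ℝ) {y : EuclideanSpace ℝ (Fin N)} (hy : y n ≠ 0) :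
    HasFDerivAt (F3 n j p r) (D3 n j p r y) y := by
  have h := ((hasFDerivAt_rpow_coord n p hy).mul (hasFDerivAt_coord j y)).mul
    (hasFDerivAt_Qr r (Q_pos hy).ne')
  refine h.congr_fderiv ?_
  ext v
  simp only [D3, F3, F2, ContinuousLinearMap.add_apply, ContinuousLinearMap.coe_smul',
    Pi.smul_apply, smul_eq_mul, PiLp.proj_apply, Pi.mul_apply]
  ring

lemma M2 (n : Fin N) (p r : ℝ) {y : EuclideanSpace ℝ (Fin N)} (hy : y n ≠ 0) :
    HasFDerivAt (F2 n p r) (D2 n p r y) y := by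
  have h := (hasFDerivAt_rpow_coord n p hy).mul (hasFDerivAt_Qr r (Q_pos hy).ne')
  refine h.congr_fderiv ?_
  ext v
  simp only [D2, F2, ContinuousLinearMap.add_apply, ContinuousLinearMap.coe_smul',
    Pi.smul_apply, smul_eq_mul, PiLp.proj_apply]
  ring


lemma proj_single (k i : Fin N) :
    EuclideanSpace.proj (𝕜 := ℝ) k (EuclideanSpace.single i (1 : ℝ)) =
      if i = k then 1 else 0 := by
  simp [PiLp.proj_apply, EuclideanSpace.single_apply, eq_comm]

lemma B_single (y : EuclideanSpace ℝ (Fin N)) (i : Fin N) :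
    B y (EuclideanSpace.single i (1 : ℝ)) = 2 * y i := by
  simp only [B, ContinuousLinearMap.sum_apply, ContinuousLinearMap.coe_smul', Pi.smul_apply,
    proj_single, smul_eq_mul, mul_ite, mul_one, mul_zero]
  rw [Finset.sum_ite_eq Finset.univ i (fun k => 2 * y k)]
  simp

lemma D3_single (n j : Fin N) (p r : ℝ) (y : EuclideanSpace ℝ (Fin N)) (i : Fin N) :
    D3 n j p r y (EuclideanSpace.single i (1 : ℝ)) =
      (p * F3 n j (p - 1) r y) * (if i = n then 1 else 0)
        + F2 n p r y * (if i = j then 1 else 0)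
        + (r * F3 n j p (r - 1) y) * (2 * y i) := by
  simp [D3, ContinuousLinearMap.add_apply, ContinuousLinearMap.coe_smul', Pi.smul_apply,
    proj_single, B_single, smul_eq_mul, eq_comm]

lemma D2_single (n : Fin N) (p r : ℝ) (y : EuclideanSpace ℝ (Fin N)) (i : Fin N) :
    D2 n p r y (EuclideanSpace.single i (1 : ℝ)) =
      (p * F2 n (p - 1) r y) * (if i = n then 1 else 0)
        + (r * F2 n p (r - 1) y) * (2 * y i) := by
  simp [D2, ContinuousLinearMap.add_apply, ContinuousLinearMap.coe_smul', Pi.smul_apply,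
    proj_single, B_single, smul_eq_mul, eq_comm]

lemma diff_B (x : EuclideanSpace ℝ (Fin N)) : DifferentiableAt ℝ B x := by
  apply DifferentiableAt.fun_sum
  intro i _
  exact (((hasFDerivAt_coord i x).differentiableAt).const_mul 2).smul_const _

lemma diff_D3 (n j : Fin N) (p r : ℝ) {x : EuclideanSpace ℝ (Fin N)} (hx : x n ≠ 0) :
    DifferentiableAt ℝ (fun y => D3 n j p r y) x := by
  refine DifferentiableAt.add (DifferentiableAt.add ?_ ?_) ?_
  · exact (((M3 n j (p - 1) r hx).differentiableAt).const_mul p).smul_const _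
  · exact ((M2 n p r hx).differentiableAt).smul_const _
  · exact (((M3 n j p (r - 1) hx).differentiableAt).const_mul r).smul (diff_B x)


lemma sum_ite_mul (n : Fin N) (f : Fin N → ℝ) :
    ∑ i, (if i = n then (1:ℝ) else 0) * f i = f n := by
  simp only [ite_mul, one_mul, zero_mul]
  rw [Finset.sum_ite_eq' Finset.univ n f]
  simp

end Stmt7

/-- for every tangential coordinate `x_j` (`j = 1, …, N-1`), the function
`u(x) = x_N^{α₊/2} x_j |x|^{-(N+α₊)}` is harmonic for the Hardy operator `-Δ - κ/x_N²`
in the half-space `{x_N > 0}`. -/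
theorem stmt_7 {N : ℕ} (hN : 2 ≤ N)
    (κ α : ℝ) (hκ0 : 0 < κ) (hκ1 : κ ≤ 1 / 4)
    (hα : α = 1 + Real.sqrt (1 - 4 * κ))
    (j : Fin N) (hj : (j : ℕ) < N - 1) :
    ∀ x : EuclideanSpace ℝ (Fin N), 0 < x ⟨N - 1, by omega⟩ →
      -laplacian
          (fun y => (y ⟨N - 1, by omega⟩) ^ (α / 2) * y j * ‖y‖ ^ (-((N : ℝ) + α))) x
        - κ * ((x ⟨N - 1, by omega⟩) ^ (α / 2) * x j * ‖x‖ ^ (-((N : ℝ) + α)))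
            / (x ⟨N - 1, by omega⟩) ^ 2 = 0 := by
  intro x hx
  classical
  have hN1 : N - 1 < N := by omega
  set n : Fin N := ⟨N - 1, hN1⟩ with hndef
  set a : ℝ := α / 2 with hadef
  set c : ℝ := -((N : ℝ) + α) / 2 with hcdef
  show -laplacian (fun y => (y n) ^ a * y j * ‖y‖ ^ (-((N : ℝ) + α))) x
      - κ * ((x n) ^ a * x j * ‖x‖ ^ (-((N : ℝ) + α))) / (x n) ^ 2 = 0
  have hxn : (0:ℝ) < x n := hx
  have hnj : j ≠ n := by
    intro h
    rw [h] at hj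
    simp only [hndef] at hj
    omega
  have hnj' : ¬ (n = j) := fun h => hnj h.symm
  have hQx : 0 < Stmt7.Q x := Stmt7.Q_pos hxn.ne'
  have h2c : -((N : ℝ) + α) = 2 * c := by rw [hcdef]; ring
  have hnorm : ∀ y : EuclideanSpace ℝ (Fin N),
      ‖y‖ ^ (-((N : ℝ) + α)) = Stmt7.Q y ^ c := by
    intro y
    rw [Stmt7.Q_eq_norm, h2c, Real.rpow_mul (norm_nonneg y),
      show ((2:ℝ)) = ((2:ℕ):ℝ) by norm_num, Real.rpow_natCast]
  have hfun : (fun y : EuclideanSpace ℝ (Fin N) =>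
      (y n) ^ a * y j * ‖y‖ ^ (-((N : ℝ) + α))) = Stmt7.F3 n j a c := by
    funext y
    rw [hnorm y, Stmt7.F3]
  rw [hfun, hnorm x]
  -- eventual equality of fderiv
  have hUopen : IsOpen {y : EuclideanSpace ℝ (Fin N) | 0 < y n} :=
    isOpen_lt continuous_const (EuclideanSpace.proj (𝕜 := ℝ) n).continuous
  have hU : ∀ᶠ y in nhds x, 0 < y n := hUopen.mem_nhds hxn
  have hfd : ∀ᶠ y in nhds x, fderiv ℝ (Stmt7.F3 n j a c) y = Stmt7.D3 n j a c y :=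
    hU.mono fun y hy => (Stmt7.M3 n j a c hy.ne').fderiv
  have hdiff : DifferentiableAt ℝ (fderiv ℝ (Stmt7.F3 n j a c)) x :=
    (Filter.EventuallyEq.differentiableAt_iff hfd).mpr (Stmt7.diff_D3 n j a c hxn.ne')
  have step : ∀ i : Fin N,
      iteratedFDeriv ℝ 2 (Stmt7.F3 n j a c) x
        ![EuclideanSpace.single i 1, EuclideanSpace.single i 1]
      = (if i = n then (1:ℝ) else 0) * ((if i = n then (1:ℝ) else 0)
            * (a*(a-1) * Stmt7.F3 n j (a-2) c x))
        + (if i = n then (1:ℝ) else 0) * ((if i = j then (1:ℝ) else 0)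
            * (2*a * Stmt7.F2 n (a-1) c x))
        + (if i = n then (1:ℝ) else 0) * (x i * (4*a*c * Stmt7.F3 n j (a-1) (c-1) x))
        + (if i = j then (1:ℝ) else 0) * (x i * (4*c * Stmt7.F2 n a (c-1) x))
        + x i * x i * (4*c*(c-1) * Stmt7.F3 n j a (c-2) x)
        + 2*c * Stmt7.F3 n j a (c-1) x := by
    intro i
    have hGfd : HasFDerivAt (fun y : EuclideanSpace ℝ (Fin N) =>
        (a * Stmt7.F3 n j (a-1) c y) * (if i = n then (1:ℝ) else 0)
          + Stmt7.F2 n a c y * (if i = j then (1:ℝ) else 0)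
          + (c * Stmt7.F3 n j a (c-1) y) * (2 * y i))
        ((if i = n then (1:ℝ) else 0) • (a • Stmt7.D3 n j (a-1) c x)
          + (if i = j then (1:ℝ) else 0) • Stmt7.D2 n a c x
          + ((c * Stmt7.F3 n j a (c-1) x) • ((2:ℝ) • EuclideanSpace.proj (𝕜 := ℝ) i)
              + (2 * x i) • (c • Stmt7.D3 n j a (c-1) x))) x := by
      refine HasFDerivAt.add (HasFDerivAt.add ?_ ?_) ?_
      · exact ((Stmt7.M3 n j (a-1) c hxn.ne').const_mul a).mul_const _
      · exact (Stmt7.M2 n a c hxn.ne').mul_const _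
      · exact ((Stmt7.M3 n j a (c-1) hxn.ne').const_mul c).mul
          ((Stmt7.hasFDerivAt_coord i x).const_mul 2)
    have h1 : iteratedFDeriv ℝ 2 (Stmt7.F3 n j a c) x
        ![EuclideanSpace.single i 1, EuclideanSpace.single i 1]
        = fderiv ℝ (fderiv ℝ (Stmt7.F3 n j a c)) x (EuclideanSpace.single i 1)
            (EuclideanSpace.single i 1) := by
      rw [iteratedFDeriv_two_apply]
      simp
    have h2 : fderiv ℝ (fun y => fderiv ℝ (Stmt7.F3 n j a c) y (EuclideanSpace.single i 1)) x
        = (fderiv ℝ (fderiv ℝ (Stmt7.F3 n j a c)) x).flip (EuclideanSpace.single i 1) := by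
      rw [fderiv_clm_apply hdiff (differentiableAt_const _)]
      simp
    have h3 : (fun y => fderiv ℝ (Stmt7.F3 n j a c) y (EuclideanSpace.single i 1))
        =ᶠ[nhds x] (fun y : EuclideanSpace ℝ (Fin N) =>
          (a * Stmt7.F3 n j (a-1) c y) * (if i = n then (1:ℝ) else 0)
            + Stmt7.F2 n a c y * (if i = j then (1:ℝ) else 0)
            + (c * Stmt7.F3 n j a (c-1) y) * (2 * y i)) :=
      hfd.mono fun y hy => by simp only [hy, Stmt7.D3_single]
    rw [h1, ← ContinuousLinearMap.flip_apply, ← h2, h3.fderiv_eq, hGfd.fderiv]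
    simp only [ContinuousLinearMap.add_apply, ContinuousLinearMap.coe_smul', Pi.smul_apply,
      smul_eq_mul, Stmt7.D3_single, Stmt7.D2_single, Stmt7.proj_single, eq_self_iff_true, if_true]
    ring
  have lap : laplacian (Stmt7.F3 n j a c) x
      = a*(a-1) * Stmt7.F3 n j (a-2) c x
        + x n * (4*a*c * Stmt7.F3 n j (a-1) (c-1) x)
        + x j * (4*c * Stmt7.F2 n a (c-1) x)
        + Stmt7.Q x * (4*c*(c-1) * Stmt7.F3 n j a (c-2) x)
        + (N:ℝ) * (2*c * Stmt7.F3 n j a (c-1) x) := by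
    rw [laplacian, Finset.sum_congr rfl fun i _ => step i]
    rw [Finset.sum_add_distrib, Finset.sum_add_distrib, Finset.sum_add_distrib,
      Finset.sum_add_distrib, Finset.sum_add_distrib]
    rw [Stmt7.sum_ite_mul, Stmt7.sum_ite_mul, Stmt7.sum_ite_mul, Stmt7.sum_ite_mul]
    rw [← Finset.sum_mul]
    rw [Finset.sum_const, Finset.card_univ, Fintype.card_fin, nsmul_eq_mul]
    simp only [eq_self_iff_true, if_true, if_neg hnj']
    have : ∑ i : Fin N, x i * x i = Stmt7.Q x := rfl
    rw [this]
    ring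
  rw [lap]
  have hk : a * (a - 1) = -κ := by
    have hs : Real.sqrt (1 - 4*κ) ^ 2 = 1 - 4*κ := Real.sq_sqrt (by linarith)
    rw [hadef, hα]
    nlinarith [hs]
  have hac : 2*a + 2*c + (N:ℝ) = 0 := by rw [hadef, hcdef]; push_cast; ring
  have ht2 : (x n) ^ (a - 2) = (x n) ^ a / (x n) ^ 2 := by
    rw [Real.rpow_sub hxn, show ((2:ℝ)) = ((2:ℕ):ℝ) by norm_num, Real.rpow_natCast]
  have ht1 : (x n) ^ (a - 1) = (x n) ^ a / (x n) := by
    rw [Real.rpow_sub hxn, Real.rpow_one]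
  have hq1 : Stmt7.Q x ^ (c - 1) = Stmt7.Q x ^ c / Stmt7.Q x := by
    rw [Real.rpow_sub hQx, Real.rpow_one]
  have hq2 : Stmt7.Q x ^ (c - 2) = Stmt7.Q x ^ c / (Stmt7.Q x) ^ 2 := by
    rw [Real.rpow_sub hQx, show ((2:ℝ)) = ((2:ℕ):ℝ) by norm_num, Real.rpow_natCast]
  simp only [Stmt7.F3, Stmt7.F2]
  rw [ht2, ht1, hq1, hq2]
  rw [show κ = -(a*(a-1)) from by linarith [hk]]
  rw [show ((N:ℝ)) = -(2*a) - 2*c from by linarith [hac]]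
  have hT : (x n) ^ a ≠ 0 := (Real.rpow_pos_of_pos hxn a).ne'
  have hR : Stmt7.Q x ^ c ≠ 0 := (Real.rpow_pos_of_pos hQx c).ne'
  field_simp
  ring
end

section
/- Let N ≥ 2, let Ω ⊂ ℝ^N be a bounded open set, let 0 < κ ≤ 1/4 and set α = α₊ = 1 + √(1 − 4κ). Then there exists a constant c > 0, depending only on N, κ and the diameter of Ω, such that for every boundary point ξ ∈ ∂Ω and every Borel set G ⊆ Ω one has ∫_G d(x)^α·|x − ξ|^{−(N + α − 2)} dx ≤ c·(∫_G d(x)^{α/2} dx)^{2/(N + α/2)}. -/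
open MeasureTheory Metric Set

private lemma keyreal {N k : ℕ} (hN : 2 ≤ N) {r : ℝ} (hr : 0 < r) :
    (r / 2 ^ (k + 1)) ^ ((2 : ℝ) - N) * (r / 2 ^ k) ^ N ≤
      2 ^ N * r ^ (2 : ℝ) * (1 / 2 : ℝ) ^ k := by
  have hs : 0 < r / 2 ^ (k + 1) := by positivity
  have h2s : r / 2 ^ k = 2 * (r / 2 ^ (k + 1)) := by
    rw [pow_succ]; field_simp
  set s := r / 2 ^ (k + 1) with hsdef
  rw [h2s, mul_pow]
  have hsN : (s : ℝ) ^ (N : ℕ) = s ^ ((N : ℕ) : ℝ) := (Real.rpow_natCast s N).symm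
  have hss : s ^ ((2 : ℝ) - N) * s ^ ((N : ℕ) : ℝ) = s ^ (2 : ℝ) := by
    rw [← Real.rpow_add hs]; ring_nf
  have hs2 : s ^ (2 : ℝ) ≤ r ^ (2 : ℝ) * (1 / 2 : ℝ) ^ k := by
    have hsr : s = r * (1 / 2 : ℝ) ^ (k + 1) := by
      rw [hsdef]; field_simp; rw [← mul_pow]; norm_num
    rw [Real.rpow_two, Real.rpow_two, hsr]
    calc (r * (1 / 2 : ℝ) ^ (k + 1)) ^ 2 = r ^ 2 * (1 / 2 : ℝ) ^ (2 * k + 2) := by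
          rw [mul_pow, ← pow_mul]; ring_nf
      _ ≤ r ^ 2 * (1 / 2 : ℝ) ^ k :=
          mul_le_mul_of_nonneg_left
            (pow_le_pow_of_le_one (by norm_num : (0:ℝ) ≤ 1 / 2) (by norm_num)
              (by omega : k ≤ 2 * k + 2)) (sq_nonneg r)
  calc s ^ ((2 : ℝ) - N) * (2 ^ N * s ^ N)
      = 2 ^ N * (s ^ ((2 : ℝ) - N) * s ^ ((N : ℕ) : ℝ)) := by rw [← hsN]; ring
    _ = 2 ^ N * s ^ (2 : ℝ) := by rw [hss]
    _ ≤ 2 ^ N * (r ^ (2 : ℝ) * (1 / 2 : ℝ) ^ k) := by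
        have : (0:ℝ) ≤ 2 ^ N := by positivity
        exact mul_le_mul_of_nonneg_left hs2 this
    _ = 2 ^ N * r ^ (2 : ℝ) * (1 / 2 : ℝ) ^ k := by ring

private lemma near_bound {N : ℕ} (hN : 2 ≤ N) {r : ℝ} (hr : 0 < r) :
    ∫⁻ x : EuclideanSpace ℝ (Fin N) in ball (0 : EuclideanSpace ℝ (Fin N)) r,
        ENNReal.ofReal (‖x‖ ^ ((2 : ℝ) - N)) ≤
      ENNReal.ofReal ((2 : ℝ) ^ N) * volume (ball (0 : EuclideanSpace ℝ (Fin N)) 1) * 2 *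
        ENNReal.ofReal (r ^ (2 : ℝ)) := by
  haveI : Nonempty (Fin N) := ⟨⟨0, by omega⟩⟩
  set V := volume (ball (0 : EuclideanSpace ℝ (Fin N)) 1) with hV
  set A : ℕ → Set (EuclideanSpace ℝ (Fin N)) := fun k => {x : EuclideanSpace ℝ (Fin N) | r / 2 ^ (k + 1) ≤ ‖x‖} ∩ ball 0 (r / 2 ^ k) with hA
  have hcover : ball (0 : EuclideanSpace ℝ (Fin N)) r ⊆ {0} ∪ ⋃ k, A k := by
    intro x hx
    rcases eq_or_ne x 0 with rfl | hx0
    · exact Or.inl rfl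
    right
    have hxn : 0 < ‖x‖ := norm_pos_iff.mpr hx0
    have hex : ∃ k : ℕ, r / 2 ^ (k + 1) ≤ ‖x‖ := by
      obtain ⟨k, hk⟩ := pow_unbounded_of_one_lt (r / ‖x‖) (one_lt_two (α := ℝ))
      refine ⟨k, ?_⟩
      rw [div_le_iff₀ (by positivity)]
      rw [div_lt_iff₀ hxn] at hk
      have hp : (0:ℝ) < 2 ^ k := pow_pos zero_lt_two k
      have : r < ‖x‖ * 2 ^ (k + 1) := by rw [pow_succ]; nlinarith
      linarith
    refine mem_iUnion.mpr ⟨Nat.find hex, ⟨Nat.find_spec hex, ?_⟩⟩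
    rw [mem_ball_zero_iff]
    rcases Nat.eq_zero_or_pos (Nat.find hex) with h0 | hpos
    · rw [h0]; simpa using (mem_ball_zero_iff.mp hx)
    · obtain ⟨j, hj⟩ := Nat.exists_eq_succ_of_ne_zero hpos.ne'
      have := Nat.find_min hex (m := j) (by omega)
      rw [hj]
      push_neg at this
      exact this
  have hmeasA : ∀ k, MeasurableSet (A k) := fun k =>
    ((isClosed_le continuous_const continuous_norm).measurableSet).inter measurableSet_ball
  calc ∫⁻ x in ball (0 : EuclideanSpace ℝ (Fin N)) r, ENNReal.ofReal (‖x‖ ^ ((2 : ℝ) - N))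
      ≤ ∫⁻ x in ({0} ∪ ⋃ k, A k : Set (EuclideanSpace ℝ (Fin N))), ENNReal.ofReal (‖x‖ ^ ((2 : ℝ) - N)) :=
        lintegral_mono_set hcover
    _ ≤ (∫⁻ x in ({0} : Set (EuclideanSpace ℝ (Fin N))), ENNReal.ofReal (‖x‖ ^ ((2 : ℝ) - N))) +
        ∫⁻ x in ⋃ k, A k, ENNReal.ofReal (‖x‖ ^ ((2 : ℝ) - N)) := lintegral_union_le _ _ _
    _ = ∫⁻ x in ⋃ k, A k, ENNReal.ofReal (‖x‖ ^ ((2 : ℝ) - N)) := by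
        rw [Measure.restrict_eq_zero.mpr (measure_singleton 0), lintegral_zero_measure, zero_add]
    _ ≤ ∑' k, ∫⁻ x in A k, ENNReal.ofReal (‖x‖ ^ ((2 : ℝ) - N)) := lintegral_iUnion_le _ _
    _ ≤ ∑' k, ENNReal.ofReal ((2 : ℝ) ^ N * r ^ (2 : ℝ)) * V * (2⁻¹ : ENNReal) ^ k := by
        refine ENNReal.tsum_le_tsum fun k => ?_
        have hsk : (0 : ℝ) < r / 2 ^ (k + 1) := by positivity
        have h1 : ∫⁻ x in A k, ENNReal.ofReal (‖x‖ ^ ((2 : ℝ) - N)) ≤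
            ∫⁻ _x in A k, ENNReal.ofReal ((r / 2 ^ (k + 1)) ^ ((2 : ℝ) - N)) := by
          refine setLIntegral_mono' (hmeasA k) fun x hx => ?_
          refine ENNReal.ofReal_le_ofReal
            (Real.rpow_le_rpow_of_nonpos hsk hx.1 ?_)
          have : (2 : ℝ) ≤ N := by exact_mod_cast hN
          linarith
        rw [setLIntegral_const] at h1
        have h2 : volume (A k) ≤ ENNReal.ofReal ((r / 2 ^ k) ^ N) * V := by
          refine le_trans (measure_mono inter_subset_right) (le_of_eq ?_)
          rw [Measure.addHaar_ball_of_pos _ _ (by positivity : (0:ℝ) < r / 2 ^ k)]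
          rw [finrank_euclideanSpace_fin]
        calc ∫⁻ x in A k, ENNReal.ofReal (‖x‖ ^ ((2 : ℝ) - N))
            ≤ ENNReal.ofReal ((r / 2 ^ (k + 1)) ^ ((2 : ℝ) - N)) * volume (A k) := h1
          _ ≤ ENNReal.ofReal ((r / 2 ^ (k + 1)) ^ ((2 : ℝ) - N)) *
              (ENNReal.ofReal ((r / 2 ^ k) ^ N) * V) := mul_le_mul_right h2 _
          _ = ENNReal.ofReal ((r / 2 ^ (k + 1)) ^ ((2 : ℝ) - N) * (r / 2 ^ k) ^ N) * V := by
              rw [ENNReal.ofReal_mul (Real.rpow_nonneg hsk.le _), mul_assoc]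
          _ ≤ ENNReal.ofReal ((2 : ℝ) ^ N * r ^ (2 : ℝ) * (1 / 2 : ℝ) ^ k) * V :=
              mul_le_mul_left (ENNReal.ofReal_le_ofReal (keyreal hN hr)) V
          _ = ENNReal.ofReal ((2 : ℝ) ^ N * r ^ (2 : ℝ)) * V * (2⁻¹ : ENNReal) ^ k := by
              have hhalf : ENNReal.ofReal ((1 / 2 : ℝ) ^ k) = (2⁻¹ : ENNReal) ^ k := by
                rw [ENNReal.ofReal_pow (by norm_num), show (1:ℝ)/2 = 2⁻¹ by norm_num,
                  ENNReal.ofReal_inv_of_pos two_pos, ENNReal.ofReal_ofNat]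
              rw [ENNReal.ofReal_mul (by positivity), hhalf]
              ring
    _ = ENNReal.ofReal ((2 : ℝ) ^ N * r ^ (2 : ℝ)) * V * 2 := by
        rw [ENNReal.tsum_mul_left, ENNReal.tsum_geometric, ENNReal.one_sub_inv_two, inv_inv]
    _ = ENNReal.ofReal ((2 : ℝ) ^ N) * V * 2 * ENNReal.ofReal (r ^ (2 : ℝ)) := by
        rw [ENNReal.ofReal_mul (by positivity)]; ring


/-- the weighted potential estimate
`∫_G d(x)^α |x-ξ|^{-(N+α-2)} dx ≤ c (∫_G d(x)^{α/2} dx)^{2/(N+α/2)}`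
for boundary points `ξ` and Borel sets `G ⊆ Ω`. -/
theorem stmt_10 {N : ℕ} (hN : 2 ≤ N)
    (Ω : Set (EuclideanSpace ℝ (Fin N))) (hΩo : IsOpen Ω) (hΩb : Bornology.IsBounded Ω)
    (κ α : ℝ) (hκ0 : 0 < κ) (hκ1 : κ ≤ 1 / 4)
    (hα : α = 1 + Real.sqrt (1 - 4 * κ)) :
    ∃ c : ℝ, 0 < c ∧
      ∀ ξ ∈ frontier Ω, ∀ G : Set (EuclideanSpace ℝ (Fin N)),
        MeasurableSet G → G ⊆ Ω →
        ∫⁻ x in G,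
            ENNReal.ofReal
              ((Metric.infDist x Ωᶜ) ^ α * ‖x - ξ‖ ^ (-((N : ℝ) + α - 2))) ≤
          ENNReal.ofReal c *
            (∫⁻ x in G, ENNReal.ofReal ((Metric.infDist x Ωᶜ) ^ (α / 2)))
              ^ (2 / ((N : ℝ) + α / 2)) := by
  haveI : Nonempty (Fin N) := ⟨⟨0, by omega⟩⟩
  have hα1 : 1 ≤ α := by
    rw [hα]; nlinarith [Real.sqrt_nonneg (1 - 4 * κ)]
  have hα0 : 0 < α := lt_of_lt_of_le one_pos hα1
  have hN2 : (2 : ℝ) ≤ (N : ℝ) := by exact_mod_cast hN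
  set γ : ℝ := (N : ℝ) + α / 2 with hγ
  have hγ0 : 0 < γ := by rw [hγ]; linarith
  set β : ℝ := γ - 2 with hβ
  have hβ0 : 0 ≤ β := by rw [hβ, hγ]; linarith
  set V := volume (ball (0 : EuclideanSpace ℝ (Fin N)) 1) with hV
  set K : ENNReal := ENNReal.ofReal ((2 : ℝ) ^ N) * V * 2 with hK
  have hVtop : V ≠ ⊤ := measure_ball_lt_top.ne
  have hKtop : K ≠ ⊤ := by
    rw [hK]
    exact ENNReal.mul_ne_top (ENNReal.mul_ne_top ENNReal.ofReal_ne_top hVtop) (by norm_num)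
  refine ⟨(K + 1).toReal + 1, by positivity, ?_⟩
  intro ξ hξ G hG hGΩ
  set d : EuclideanSpace ℝ (Fin N) → ℝ := fun x => Metric.infDist x Ωᶜ with hd
  set I := ∫⁻ x in G, ENNReal.ofReal (d x ^ (α / 2)) with hI
  have hξΩc : ξ ∈ Ωᶜ := (hΩo.frontier_eq ▸ hξ).2
  have hd0 : ∀ x, 0 ≤ d x := fun x => Metric.infDist_nonneg
  have hdle : ∀ x, d x ≤ ‖x - ξ‖ := fun x => by
    rw [← dist_eq_norm]; exact Metric.infDist_le_dist_of_mem hξΩc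
  have hne : ∀ x ∈ G, 0 < ‖x - ξ‖ := by
    intro x hx
    have hxξ : x ≠ ξ := by rintro rfl; exact hξΩc (hGΩ hx)
    exact norm_pos_iff.mpr (sub_ne_zero_of_ne hxξ)
  -- pointwise near bound
  have hptnear : ∀ x ∈ G,
      ENNReal.ofReal (d x ^ α * ‖x - ξ‖ ^ (-((N : ℝ) + α - 2))) ≤
        ENNReal.ofReal (‖x - ξ‖ ^ ((2 : ℝ) - N)) := by
    intro x hx
    have hx0 := hne x hx
    refine ENNReal.ofReal_le_ofReal ?_
    have h1 : d x ^ α ≤ ‖x - ξ‖ ^ α := Real.rpow_le_rpow (hd0 x) (hdle x) hα0.le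
    have h2 : ‖x - ξ‖ ^ α * ‖x - ξ‖ ^ (-((N : ℝ) + α - 2)) = ‖x - ξ‖ ^ ((2 : ℝ) - N) := by
      rw [← Real.rpow_add hx0]; congr 1; ring
    calc d x ^ α * ‖x - ξ‖ ^ (-((N : ℝ) + α - 2))
        ≤ ‖x - ξ‖ ^ α * ‖x - ξ‖ ^ (-((N : ℝ) + α - 2)) :=
          mul_le_mul_of_nonneg_right h1 (Real.rpow_nonneg (norm_nonneg _) _)
      _ = _ := h2
  -- pointwise far bound
  have hptfar : ∀ r : ℝ, 0 < r → ∀ x ∈ G, r ≤ ‖x - ξ‖ →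
      ENNReal.ofReal (d x ^ α * ‖x - ξ‖ ^ (-((N : ℝ) + α - 2))) ≤
        ENNReal.ofReal (r ^ (-β)) * ENNReal.ofReal (d x ^ (α / 2)) := by
    intro r hr x hx hrx
    have hx0 := hne x hx
    rw [← ENNReal.ofReal_mul (Real.rpow_nonneg hr.le _)]
    refine ENNReal.ofReal_le_ofReal ?_
    have hsplit : d x ^ α = d x ^ (α / 2) * d x ^ (α / 2) := by
      rw [← Real.rpow_add' (hd0 x) (fun h => hα0.ne' (by linarith))]
      congr 1; ring
    have h1 : d x ^ (α / 2) ≤ ‖x - ξ‖ ^ (α / 2) :=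
      Real.rpow_le_rpow (hd0 x) (hdle x) (by linarith)
    have h2 : ‖x - ξ‖ ^ (α / 2) * ‖x - ξ‖ ^ (-((N : ℝ) + α - 2)) = ‖x - ξ‖ ^ (-β) := by
      rw [← Real.rpow_add hx0]; congr 1; rw [hβ, hγ]; ring
    have h3 : ‖x - ξ‖ ^ (-β) ≤ r ^ (-β) :=
      Real.rpow_le_rpow_of_nonpos hr hrx (by linarith)
    have hwn : (0 : ℝ) ≤ ‖x - ξ‖ ^ (-((N : ℝ) + α - 2)) := Real.rpow_nonneg (norm_nonneg _) _
    calc d x ^ α * ‖x - ξ‖ ^ (-((N : ℝ) + α - 2))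
        = d x ^ (α / 2) * (d x ^ (α / 2) * ‖x - ξ‖ ^ (-((N : ℝ) + α - 2))) := by
          rw [hsplit]; ring
      _ ≤ d x ^ (α / 2) * (‖x - ξ‖ ^ (α / 2) * ‖x - ξ‖ ^ (-((N : ℝ) + α - 2))) :=
          mul_le_mul_of_nonneg_left (mul_le_mul_of_nonneg_right h1 hwn)
            (Real.rpow_nonneg (hd0 x) _)
      _ = d x ^ (α / 2) * ‖x - ξ‖ ^ (-β) := by rw [h2]
      _ ≤ d x ^ (α / 2) * r ^ (-β) :=
          mul_le_mul_of_nonneg_left h3 (Real.rpow_nonneg (hd0 x) _)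
      _ = r ^ (-β) * d x ^ (α / 2) := mul_comm _ _
  rcases eq_or_ne I 0 with hI0 | hI0
  · -- degenerate case : the right-hand side integral vanishes
    have hg : AEMeasurable (fun x => ENNReal.ofReal (d x ^ (α / 2))) (volume.restrict G) :=
      (ENNReal.continuous_ofReal.comp
        ((continuous_infDist_pt Ωᶜ).rpow_const fun x => Or.inr (by linarith))).aemeasurable
    have h0 := (lintegral_eq_zero_iff' hg).mp hI0
    have hzero : ∀ᵐ x ∂(volume.restrict G),
        ENNReal.ofReal (d x ^ α * ‖x - ξ‖ ^ (-((N : ℝ) + α - 2))) = 0 := by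
      filter_upwards [h0] with x h1
      have hd20 : d x ^ (α / 2) ≤ 0 := by
        have := h1
        simpa [ENNReal.ofReal_eq_zero] using this
      have hdx : d x = 0 := by
        by_contra hne'
        have hpos : 0 < d x := lt_of_le_of_ne (hd0 x) (Ne.symm hne')
        exact absurd hd20 (not_le.mpr (Real.rpow_pos_of_pos hpos _))
      rw [hdx, Real.zero_rpow (ne_of_gt hα0), zero_mul, ENNReal.ofReal_zero]
    rw [lintegral_congr_ae hzero, lintegral_zero]
    exact zero_le
  · have hItop : I ≠ ⊤ := by
      set D := Metric.diam Ω with hD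
      have hDd : ∀ x ∈ G, d x ^ (α / 2) ≤ (D + 1) ^ (α / 2) := by
        intro x hx
        refine Real.rpow_le_rpow (hd0 x) ?_ (by linarith)
        have h1 : d x ≤ dist x ξ := Metric.infDist_le_dist_of_mem hξΩc
        have h2 : dist x ξ ≤ D := by
          have := Metric.dist_le_diam_of_mem hΩb.closure
            (subset_closure (hGΩ hx)) (frontier_subset_closure hξ)
          rwa [Metric.diam_closure] at this
        linarith
      have hle : I ≤ ENNReal.ofReal ((D + 1) ^ (α / 2)) * volume G := by
        calc I ≤ ∫⁻ _x in G, ENNReal.ofReal ((D + 1) ^ (α / 2)) :=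
              setLIntegral_mono' hG fun x hx => ENNReal.ofReal_le_ofReal (hDd x hx)
          _ = _ := setLIntegral_const _ _
      exact ne_top_of_le_ne_top
        (ENNReal.mul_ne_top ENNReal.ofReal_ne_top (hΩb.subset hGΩ).measure_lt_top.ne) hle
    set t := I.toReal with ht
    have ht0 : 0 < t := ENNReal.toReal_pos hI0 hItop
    set r := t ^ γ⁻¹ with hrdef
    have hr : 0 < r := Real.rpow_pos_of_pos ht0 _
    have hsplit := lintegral_inter_add_diff (μ := (volume : Measure (EuclideanSpace ℝ (Fin N))))
      (fun x => ENNReal.ofReal (d x ^ α * ‖x - ξ‖ ^ (-((N : ℝ) + α - 2)))) G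
      (measurableSet_ball (x := ξ) (ε := r))
    rw [← hsplit]
    have hnear : ∫⁻ x in G ∩ ball ξ r,
        ENNReal.ofReal (d x ^ α * ‖x - ξ‖ ^ (-((N : ℝ) + α - 2))) ≤
        K * ENNReal.ofReal (r ^ (2 : ℝ)) := by
      calc ∫⁻ x in G ∩ ball ξ r,
            ENNReal.ofReal (d x ^ α * ‖x - ξ‖ ^ (-((N : ℝ) + α - 2)))
          ≤ ∫⁻ x in G ∩ ball ξ r, ENNReal.ofReal (‖x - ξ‖ ^ ((2 : ℝ) - N)) :=
            setLIntegral_mono' (hG.inter measurableSet_ball) fun x hx => hptnear x hx.1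
        _ ≤ ∫⁻ x in ball ξ r, ENNReal.ofReal (‖x - ξ‖ ^ ((2 : ℝ) - N)) :=
            lintegral_mono_set inter_subset_right
        _ = ∫⁻ y in ball (0 : EuclideanSpace ℝ (Fin N)) r,
              ENNReal.ofReal (‖y‖ ^ ((2 : ℝ) - N)) := by
            have hmp := measurePreserving_sub_right
              (volume : Measure (EuclideanSpace ℝ (Fin N))) ξ
            have hemb : MeasurableEmbedding
                (fun x : EuclideanSpace ℝ (Fin N) => x - ξ) :=
              (MeasurableEquiv.subRight ξ).measurableEmbedding
            have hpre : (fun x : EuclideanSpace ℝ (Fin N) => x - ξ) ⁻¹' (ball 0 r) =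
                ball ξ r := by
              ext x
              simp [mem_ball, dist_eq_norm]
            rw [← hpre]
            exact hmp.setLIntegral_comp_preimage_emb hemb
              (fun y => ENNReal.ofReal (‖y‖ ^ ((2 : ℝ) - N))) (ball 0 r)
        _ ≤ K * ENNReal.ofReal (r ^ (2 : ℝ)) := by rw [hK, hV]; exact near_bound hN hr
    have hfar : ∫⁻ x in G \ ball ξ r,
        ENNReal.ofReal (d x ^ α * ‖x - ξ‖ ^ (-((N : ℝ) + α - 2))) ≤
        ENNReal.ofReal (r ^ (-β)) * I := by
      calc ∫⁻ x in G \ ball ξ r,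
            ENNReal.ofReal (d x ^ α * ‖x - ξ‖ ^ (-((N : ℝ) + α - 2)))
          ≤ ∫⁻ x in G \ ball ξ r,
              ENNReal.ofReal (r ^ (-β)) * ENNReal.ofReal (d x ^ (α / 2)) := by
            refine setLIntegral_mono' (hG.diff measurableSet_ball) fun x hx => ?_
            refine hptfar r hr x hx.1 ?_
            have hnb : ¬ dist x ξ < r := fun h => hx.2 (mem_ball.mpr h)
            rw [← dist_eq_norm]
            exact not_lt.mp hnb
        _ = ENNReal.ofReal (r ^ (-β)) *
              ∫⁻ x in G \ ball ξ r, ENNReal.ofReal (d x ^ (α / 2)) :=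
            lintegral_const_mul' _ _ ENNReal.ofReal_ne_top
        _ ≤ ENNReal.ofReal (r ^ (-β)) * I :=
            mul_le_mul_right (lintegral_mono_set diff_subset) _
    have hKr : ENNReal.ofReal (r ^ (2 : ℝ)) = I ^ (2 / γ) := by
      rw [hrdef, ← Real.rpow_mul ht0.le, ← ENNReal.ofReal_rpow_of_pos ht0,
        ENNReal.ofReal_toReal hItop]
      congr 1
      field_simp
    have hrI : ENNReal.ofReal (r ^ (-β)) * I = I ^ (2 / γ) := by
      rw [hrdef, ← Real.rpow_mul ht0.le, ← ENNReal.ofReal_rpow_of_pos ht0,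
        ENNReal.ofReal_toReal hItop]
      have h4 : I ^ (γ⁻¹ * -β) * I = I ^ (γ⁻¹ * -β + 1) := by
        rw [ENNReal.rpow_add _ _ hI0 hItop, ENNReal.rpow_one]
      rw [h4]
      congr 1
      rw [hβ]
      field_simp
      ring
    calc (∫⁻ x in G ∩ ball ξ r,
            ENNReal.ofReal (d x ^ α * ‖x - ξ‖ ^ (-((N : ℝ) + α - 2)))) +
          ∫⁻ x in G \ ball ξ r,
            ENNReal.ofReal (d x ^ α * ‖x - ξ‖ ^ (-((N : ℝ) + α - 2)))
        ≤ K * ENNReal.ofReal (r ^ (2 : ℝ)) + ENNReal.ofReal (r ^ (-β)) * I :=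
          add_le_add hnear hfar
      _ = (K + 1) * I ^ (2 / γ) := by rw [hKr, hrI]; ring
      _ ≤ ENNReal.ofReal ((K + 1).toReal + 1) * I ^ (2 / γ) := by
          refine mul_le_mul_left ?_ _
          rw [ENNReal.ofReal_add ENNReal.toReal_nonneg zero_le_one,
            ENNReal.ofReal_toReal (by simp [ENNReal.add_ne_top, hKtop]),
            ENNReal.ofReal_one]
          exact le_self_add
end

section
/- Let N ≥ 3, let Ω ⊂ ℝ^N be a bounded open set, let 0 < κ ≤ 1/4 and set α = α₊ = 1 + √(1 − 4κ). Define G̃(x, y) = min{ |x − y|^{2−N}, d(x)^{α/2}·d(y)^{α/2}·|x − y|^{2 − N − α} } for x ≠ y in Ω. Then there exists a constant c > 0, depending only on N, κ and the diameter of Ω, such that for every y ∈ Ω and every Borel set Θ ⊆ Ω one has ∫_Θ G̃(x, y)·d(x)^{α/2} dx ≤ c·d(y)^{α/2}·(∫_Θ d(x)^{α/2} dx)^{2/(N + α/2)}. -/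
open MeasureTheory Metric
open scoped ENNReal


lemma aux_ball {N : ℕ} (hN : 3 ≤ N) :
    ∃ c₁ : ℝ, 0 < c₁ ∧ ∀ (y : EuclideanSpace ℝ (Fin N)) (ρ : ℝ), 0 ≤ ρ →
      (∫⁻ x in Metric.ball y ρ, ENNReal.ofReal (‖x - y‖ ^ ((2:ℝ) - N))) ≤
        ENNReal.ofReal (c₁ * ρ ^ (2:ℝ)) := by
  haveI : Nonempty (Fin N) := ⟨⟨0, by omega⟩⟩
  set E := EuclideanSpace ℝ (Fin N)
  set V : ℝ≥0∞ := volume (Metric.ball (0 : E) 1) with hVdef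
  have hVlt : V ≠ ⊤ := measure_ball_lt_top.ne
  have hVnn : 0 ≤ V.toReal := ENNReal.toReal_nonneg
  set c₁ : ℝ := 2 ^ ((N:ℝ) - 2) * (2 * V.toReal) + 1 with hc₁def
  have hc₁ : 0 < c₁ := by positivity
  refine ⟨c₁, hc₁, ?_⟩
  intro y ρ hρ
  rcases eq_or_lt_of_le hρ with h0 | hρpos
  · rw [← h0, Metric.ball_eq_empty.2 le_rfl]
    simp
  set f : E → ℝ≥0∞ := fun x => ENNReal.ofReal (‖x - y‖ ^ ((2:ℝ) - N)) with hf
  set S : ℕ → Set E := fun k => Metric.ball y (ρ * 2⁻¹ ^ k) \ Metric.ball y (ρ * 2⁻¹ ^ (k+1)) with hS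
  have hcover : Metric.ball y ρ ⊆ {y} ∪ ⋃ k, S k := by
    intro x hx
    rcases eq_or_ne x y with h | h
    · exact Or.inl (by simp [h])
    · right
      have hr0 : 0 < dist x y := dist_pos.2 h
      have hrρ : dist x y < ρ := Metric.mem_ball.1 hx
      have hex : ∃ k : ℕ, ρ * 2⁻¹ ^ k ≤ dist x y := by
        obtain ⟨n, hn⟩ := exists_pow_lt_of_lt_one (div_pos hr0 hρpos) (by norm_num : (2⁻¹:ℝ) < 1)
        exact ⟨n, by nlinarith [(lt_div_iff₀ hρpos).1 hn]⟩
      set k := Nat.find hex with hk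
      have hspec : ρ * 2⁻¹ ^ k ≤ dist x y := Nat.find_spec hex
      have hk0 : k ≠ 0 := by
        intro hk0
        rw [hk0] at hspec; simp at hspec; linarith
      obtain ⟨m, hm⟩ := Nat.exists_eq_succ_of_ne_zero hk0
      have hmin : ¬(ρ * 2⁻¹ ^ m ≤ dist x y) := Nat.find_min hex (by omega)
      have hspec' : ρ * 2⁻¹ ^ (m+1) ≤ dist x y := by rw [hm] at hspec; exact hspec
      refine Set.mem_iUnion.2 ⟨m, ?_⟩
      refine ⟨Metric.mem_ball.2 (by push_neg at hmin; exact hmin), fun hmem => ?_⟩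
      exact absurd (Metric.mem_ball.1 hmem) (not_lt.2 hspec')
  have hNR : (3:ℝ) ≤ (N:ℝ) := by exact_mod_cast hN
  have hmono : (∫⁻ x in Metric.ball y ρ, f x) ≤ ∫⁻ x in ({y} ∪ ⋃ k, S k : Set E), f x :=
    lintegral_mono_set hcover
  have h1 : (∫⁻ x in ({y} ∪ ⋃ k, S k : Set E), f x) ≤
      (∫⁻ x in ({y} : Set E), f x) + ∫⁻ x in (⋃ k, S k), f x := lintegral_union_le _ _ _
  have h2 : (∫⁻ x in ({y} : Set E), f x) = 0 := by
    rw [Measure.restrict_eq_zero.2 (measure_singleton y), lintegral_zero_measure]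
  have h3 : (∫⁻ x in (⋃ k, S k), f x) ≤ ∑' k, ∫⁻ x in S k, f x := lintegral_iUnion_le _ _
  set B : ℝ := 2 ^ ((N:ℝ)-2) * ρ ^ (2:ℝ) with hB
  have hBnn : 0 ≤ B := by positivity
  have hshell : ∀ k : ℕ, (∫⁻ x in S k, f x) ≤ ENNReal.ofReal (B * (4⁻¹:ℝ) ^ k) * V := by
    intro k
    set rk : ℝ := ρ * 2⁻¹ ^ k with hrk
    have hrkpos : 0 < rk := by positivity
    have hub : ∀ x ∈ S k, f x ≤ ENNReal.ofReal ((rk/2) ^ ((2:ℝ) - N)) := by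
      intro x hxk
      have hge : rk / 2 ≤ ‖x - y‖ := by
        have h' := hxk.2
        rw [Metric.mem_ball, not_lt, dist_eq_norm] at h'
        calc rk/2 = ρ * 2⁻¹ ^ (k+1) := by rw [hrk]; ring
        _ ≤ ‖x - y‖ := h'
      exact ENNReal.ofReal_le_ofReal
        (Real.rpow_le_rpow_of_nonpos (by positivity) hge (by linarith))
    have hSm : MeasurableSet (S k) := measurableSet_ball.diff measurableSet_ball
    have hball : volume (Metric.ball y rk) = ENNReal.ofReal (rk ^ N) * V := by
      rw [Measure.addHaar_ball volume y hrkpos.le, finrank_euclideanSpace_fin]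
    have hreal : (rk/2) ^ ((2:ℝ)-(N:ℝ)) * rk ^ N = B * (4⁻¹:ℝ) ^ k := by
      have e1 : (rk/2) ^ ((2:ℝ)-(N:ℝ)) = rk ^ ((2:ℝ)-(N:ℝ)) / 2 ^ ((2:ℝ)-(N:ℝ)) :=
        Real.div_rpow hrkpos.le (by norm_num) _
      have e2 : (2:ℝ) ^ ((2:ℝ)-(N:ℝ)) = ((2:ℝ) ^ ((N:ℝ)-2))⁻¹ := by
        rw [← Real.rpow_neg (by norm_num : (0:ℝ) ≤ 2)]
        congr 1; ring
      have e3 : rk ^ N = rk ^ ((N:ℝ)) := (Real.rpow_natCast rk N).symm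
      have e4 : rk ^ ((2:ℝ)-(N:ℝ)) * rk ^ ((N:ℝ)) = rk ^ (2:ℝ) := by
        rw [← Real.rpow_add hrkpos]; norm_num
      have e5' : ((2:ℝ)⁻¹^k)^2 = (4:ℝ)⁻¹^k := by
        rw [← pow_mul, mul_comm k 2, pow_mul]; norm_num
      have e5 : rk ^ (2:ℝ) = ρ ^ (2:ℝ) * (4⁻¹:ℝ)^k := by
        rw [Real.rpow_two, Real.rpow_two, hrk, mul_pow, e5']
      rw [e1, e2, e3, div_mul_eq_mul_div, e4, e5, hB, div_eq_mul_inv, inv_inv]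
      ring
    calc (∫⁻ x in S k, f x) ≤ ∫⁻ _x in S k, ENNReal.ofReal ((rk/2) ^ ((2:ℝ)-N)) :=
          setLIntegral_mono' hSm hub
    _ = ENNReal.ofReal ((rk/2) ^ ((2:ℝ)-N)) * volume (S k) := setLIntegral_const _ _
    _ ≤ ENNReal.ofReal ((rk/2) ^ ((2:ℝ)-N)) * volume (Metric.ball y rk) := by
        gcongr
        exact Set.diff_subset
    _ = ENNReal.ofReal ((rk/2) ^ ((2:ℝ)-N) * rk ^ N) * V := by
        rw [hball, ← mul_assoc, ← ENNReal.ofReal_mul (by positivity)]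
    _ = ENNReal.ofReal (B * (4⁻¹:ℝ) ^ k) * V := by rw [hreal]
  have hgeo : (∑' (k:ℕ), ENNReal.ofReal ((4⁻¹:ℝ) ^ k)) ≤ 2 := by
    have he : ∀ k:ℕ, ENNReal.ofReal ((4⁻¹:ℝ) ^ k) = (ENNReal.ofReal 4⁻¹) ^ k :=
      fun k => ENNReal.ofReal_pow (by norm_num) k
    simp_rw [he, ENNReal.tsum_geometric]
    have h14 : (1:ℝ≥0∞) - ENNReal.ofReal 4⁻¹ = ENNReal.ofReal (3/4) := by
      rw [← ENNReal.ofReal_one, ← ENNReal.ofReal_sub _ (by norm_num)]; norm_num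
    rw [h14, ← ENNReal.ofReal_inv_of_pos (by norm_num)]
    calc ENNReal.ofReal ((3/4:ℝ))⁻¹ ≤ ENNReal.ofReal 2 := ENNReal.ofReal_le_ofReal (by norm_num)
    _ = 2 := by simp
  have hsum : (∑' k, ∫⁻ x in S k, f x) ≤ ENNReal.ofReal B * 2 * V := by
    calc (∑' k, ∫⁻ x in S k, f x) ≤ ∑' (k:ℕ), ENNReal.ofReal (B * (4⁻¹:ℝ) ^ k) * V :=
          ENNReal.tsum_le_tsum hshell
    _ = (∑' (k:ℕ), ENNReal.ofReal B * ENNReal.ofReal ((4⁻¹:ℝ) ^ k)) * V := by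
        rw [ENNReal.tsum_mul_right]
        congr 1
        exact tsum_congr fun k => by rw [← ENNReal.ofReal_mul hBnn]
    _ = ENNReal.ofReal B * (∑' (k:ℕ), ENNReal.ofReal ((4⁻¹:ℝ) ^ k)) * V := by
        rw [ENNReal.tsum_mul_left]
    _ ≤ ENNReal.ofReal B * 2 * V := by gcongr
  calc (∫⁻ x in Metric.ball y ρ, f x) ≤ (∫⁻ x in ({y} : Set E), f x) + ∫⁻ x in (⋃ k, S k), f x :=
        hmono.trans h1
  _ = ∫⁻ x in (⋃ k, S k), f x := by rw [h2, zero_add]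
  _ ≤ ∑' k, ∫⁻ x in S k, f x := h3
  _ ≤ ENNReal.ofReal B * 2 * V := hsum
  _ = ENNReal.ofReal (B * (2 * V.toReal)) := by
      rw [← ENNReal.ofReal_toReal hVlt]
      rw [show ((2:ℝ≥0∞)) = ENNReal.ofReal (2:ℝ) by simp]
      rw [← ENNReal.ofReal_mul hBnn, ← ENNReal.ofReal_mul (by positivity),
        ENNReal.ofReal_toReal hVlt, ← ENNReal.ofReal_toReal hVlt]
      ring_nf
  _ ≤ ENNReal.ofReal (c₁ * ρ ^ (2:ℝ)) := by
      apply ENNReal.ofReal_le_ofReal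
      have hρ2 : 0 ≤ ρ ^ (2:ℝ) := by positivity
      have hA : 0 ≤ (2:ℝ) ^ ((N:ℝ)-2) := by positivity
      rw [hB, hc₁def]
      have hle : (2:ℝ)^((N:ℝ)-2) * (2*V.toReal) ≤ 2^((N:ℝ)-2) * (2*V.toReal) + 1 := by linarith
      calc (2:ℝ)^((N:ℝ)-2) * ρ^(2:ℝ) * (2*V.toReal)
          = (2^((N:ℝ)-2) * (2*V.toReal)) * ρ^(2:ℝ) := by ring
      _ ≤ (2^((N:ℝ)-2) * (2*V.toReal) + 1) * ρ^(2:ℝ) := mul_le_mul_of_nonneg_right hle hρ2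


lemma aux_pointwise {N : ℕ} (hN : 3 ≤ N) {α a b r : ℝ}
    (hα1 : 1 ≤ α) (hα2 : α < 2) (ha : 0 ≤ a) (hb : 0 ≤ b) (hr : 0 ≤ r) (hab : a ≤ b + r) :
    min (r ^ ((2:ℝ)-N)) (a ^ (α/2) * b ^ (α/2) * r ^ ((2:ℝ)-N-α)) * a ^ (α/2) ≤
      4 * b ^ (α/2) * min (r ^ ((2:ℝ)-N)) (a ^ (α/2) * r ^ ((2:ℝ)-N-α/2)) := by
  have hNR : (3:ℝ) ≤ (N:ℝ) := by exact_mod_cast hN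
  have hβ0 : 0 ≤ α/2 := by linarith
  have hβ1 : α/2 ≤ 1 := by linarith
  rcases eq_or_lt_of_le hr with h0 | hrpos
  · rw [← h0, Real.zero_rpow (by intro h; linarith : (2:ℝ)-N ≠ 0),
      Real.zero_rpow (by intro h; linarith : (2:ℝ)-N-α ≠ 0),
      Real.zero_rpow (by intro h; linarith : (2:ℝ)-N-α/2 ≠ 0)]
    simp
  have haβ : 0 ≤ a ^ (α/2) := Real.rpow_nonneg ha _
  have hbβ : 0 ≤ b ^ (α/2) := Real.rpow_nonneg hb _
  have hrβ : 0 ≤ r ^ (α/2) := Real.rpow_nonneg hr _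
  have hr2N : 0 ≤ r ^ ((2:ℝ)-N) := Real.rpow_nonneg hr _
  have hr2Nα : 0 ≤ r ^ ((2:ℝ)-N-α) := Real.rpow_nonneg hr _
  have hr2Nβ : 0 ≤ r ^ ((2:ℝ)-N-α/2) := Real.rpow_nonneg hr _
  rw [mul_min_of_nonneg _ _ (by positivity : (0:ℝ) ≤ 4 * b ^ (α/2))]
  have h2β : (2:ℝ) ^ (α/2) ≤ 2 := by
    calc (2:ℝ) ^ (α/2) ≤ 2 ^ (1:ℝ) := Real.rpow_le_rpow_of_exponent_le one_le_two hβ1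
    _ = 2 := Real.rpow_one 2
  rcases le_or_gt a (2*r) with h2r | h2r
  · -- a ≤ 2r : use second entry of min
    have haup : a ^ (α/2) ≤ 2 * r ^ (α/2) := by
      calc a ^ (α/2) ≤ (2*r) ^ (α/2) := Real.rpow_le_rpow ha h2r hβ0
      _ = 2 ^ (α/2) * r ^ (α/2) := Real.mul_rpow (by norm_num) hr
      _ ≤ 2 * r ^ (α/2) := mul_le_mul_of_nonneg_right h2β hrβ
    refine le_trans (mul_le_mul_of_nonneg_right (min_le_right _ _) haβ) (le_min ?_ ?_)
    · have hrr : r ^ (α/2) * r ^ (α/2) * r ^ ((2:ℝ)-N-α) = r ^ ((2:ℝ)-N) := by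
        rw [← Real.rpow_add hrpos, ← Real.rpow_add hrpos]; congr 1; ring
      calc a ^ (α/2) * b ^ (α/2) * r ^ ((2:ℝ)-N-α) * a ^ (α/2)
          = b ^ (α/2) * (a ^ (α/2) * a ^ (α/2) * r ^ ((2:ℝ)-N-α)) := by ring
      _ ≤ b ^ (α/2) * ((2 * r ^ (α/2)) * (2 * r ^ (α/2)) * r ^ ((2:ℝ)-N-α)) := by gcongr
      _ = 4 * b ^ (α/2) * (r ^ (α/2) * r ^ (α/2) * r ^ ((2:ℝ)-N-α)) := by ring
      _ = 4 * b ^ (α/2) * r ^ ((2:ℝ)-N) := by rw [hrr]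
    · have hrr2 : r ^ (α/2) * r ^ ((2:ℝ)-N-α) = r ^ ((2:ℝ)-N-α/2) := by
        rw [← Real.rpow_add hrpos]; congr 1; ring
      calc a ^ (α/2) * b ^ (α/2) * r ^ ((2:ℝ)-N-α) * a ^ (α/2)
          = (b ^ (α/2) * a ^ (α/2)) * (a ^ (α/2) * r ^ ((2:ℝ)-N-α)) := by ring
      _ ≤ (b ^ (α/2) * a ^ (α/2)) * ((2 * r ^ (α/2)) * r ^ ((2:ℝ)-N-α)) := by gcongr
      _ = 2 * (b ^ (α/2) * a ^ (α/2)) * (r ^ (α/2) * r ^ ((2:ℝ)-N-α)) := by ring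
      _ = 2 * (b ^ (α/2) * a ^ (α/2)) * r ^ ((2:ℝ)-N-α/2) := by rw [hrr2]
      _ ≤ 4 * b ^ (α/2) * (a ^ (α/2) * r ^ ((2:ℝ)-N-α/2)) := by nlinarith [mul_nonneg (mul_nonneg hbβ haβ) hr2Nβ]
  · -- a > 2r
    have hrb : r < b := by linarith
    have hab2 : a ≤ 2*b := by linarith
    have haup : a ^ (α/2) ≤ 2 * b ^ (α/2) := by
      calc a ^ (α/2) ≤ (2*b) ^ (α/2) := Real.rpow_le_rpow ha hab2 hβ0
      _ = 2 ^ (α/2) * b ^ (α/2) := Real.mul_rpow (by norm_num) hb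
      _ ≤ 2 * b ^ (α/2) := mul_le_mul_of_nonneg_right h2β hbβ
    refine le_trans (mul_le_mul_of_nonneg_right (min_le_left _ _) haβ) (le_min ?_ ?_)
    · calc r ^ ((2:ℝ)-N) * a ^ (α/2) ≤ r ^ ((2:ℝ)-N) * (2 * b ^ (α/2)) := by gcongr
      _ ≤ 4 * b ^ (α/2) * r ^ ((2:ℝ)-N) := by nlinarith [mul_nonneg hr2N hbβ]
    · have hrb' : r ^ (α/2) ≤ b ^ (α/2) := Real.rpow_le_rpow hr hrb.le hβ0
      have hrr3 : r ^ ((2:ℝ)-N) = r ^ (α/2) * r ^ ((2:ℝ)-N-α/2) := by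
        rw [← Real.rpow_add hrpos]; congr 1; ring
      calc r ^ ((2:ℝ)-N) * a ^ (α/2) = (r ^ (α/2) * r ^ ((2:ℝ)-N-α/2)) * a ^ (α/2) := by rw [← hrr3]
      _ ≤ (b ^ (α/2) * r ^ ((2:ℝ)-N-α/2)) * a ^ (α/2) := by gcongr
      _ ≤ 4 * b ^ (α/2) * (a ^ (α/2) * r ^ ((2:ℝ)-N-α/2)) := by nlinarith [mul_nonneg (mul_nonneg hbβ hr2Nβ) haβ]

/-- the weighted Green-potential estimate
`∫_Θ G̃(x,y) d(x)^{α/2} dx ≤ c d(y)^{α/2} (∫_Θ d(x)^{α/2} dx)^{2/(N+α/2)}`,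
where `G̃(x,y) = min{|x-y|^{2-N}, d(x)^{α/2} d(y)^{α/2} |x-y|^{2-N-α}}` is the
two-sided comparison expression for the Green function of `-Δ - κ/d²`. -/
theorem stmt_11 {N : ℕ} (hN : 3 ≤ N)
    (Ω : Set (EuclideanSpace ℝ (Fin N))) (hΩo : IsOpen Ω) (hΩb : Bornology.IsBounded Ω)
    (κ α : ℝ) (hκ0 : 0 < κ) (hκ1 : κ ≤ 1 / 4)
    (hα : α = 1 + Real.sqrt (1 - 4 * κ)) :
    ∃ c : ℝ, 0 < c ∧
      ∀ y ∈ Ω, ∀ Θ : Set (EuclideanSpace ℝ (Fin N)),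
        MeasurableSet Θ → Θ ⊆ Ω →
        ∫⁻ x in Θ,
            ENNReal.ofReal
              (min (‖x - y‖ ^ ((2 : ℝ) - N))
                  ((Metric.infDist x Ωᶜ) ^ (α / 2) * (Metric.infDist y Ωᶜ) ^ (α / 2)
                    * ‖x - y‖ ^ ((2 : ℝ) - N - α))
                * (Metric.infDist x Ωᶜ) ^ (α / 2)) ≤
          ENNReal.ofReal (c * (Metric.infDist y Ωᶜ) ^ (α / 2)) *
            (∫⁻ x in Θ, ENNReal.ofReal ((Metric.infDist x Ωᶜ) ^ (α / 2)))
              ^ (2 / ((N : ℝ) + α / 2)) := by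
  obtain ⟨c₁, hc₁, hball⟩ := aux_ball hN
  have hNR : (3:ℝ) ≤ (N:ℝ) := by exact_mod_cast hN
  have hsq : Real.sqrt (1 - 4*κ) < 1 := by
    calc Real.sqrt (1 - 4*κ) < Real.sqrt 1 := Real.sqrt_lt_sqrt (by linarith) (by linarith)
    _ = 1 := Real.sqrt_one
  have hα1 : 1 ≤ α := by rw [hα]; linarith [Real.sqrt_nonneg (1 - 4*κ)]
  have hα2 : α < 2 := by rw [hα]; linarith
  have hβ0 : 0 ≤ α/2 := by linarith
  refine ⟨4*(c₁+1), by positivity, ?_⟩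
  intro y hy Θ hΘm hΘΩ
  -- bounding radius
  obtain ⟨R₀, hR₀⟩ := hΩb.subset_closedBall 0
  set R : ℝ := max R₀ 0 with hRdef
  have hR : Ω ⊆ Metric.closedBall 0 R :=
    hR₀.trans (Metric.closedBall_subset_closedBall (le_max_left _ _))
  have hR0 : 0 ≤ R := le_max_right _ _
  -- upper bound for the distance function
  have hD : ∀ x ∈ Ω, Metric.infDist x Ωᶜ ≤ 2*R+1 := by
    intro x hx
    set z : EuclideanSpace ℝ (Fin N) := EuclideanSpace.single (⟨0, by omega⟩ : Fin N) (R+1)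
      with hzdef
    have hz : ‖z‖ = R+1 := by
      rw [hzdef, EuclideanSpace.norm_single, Real.norm_eq_abs, abs_of_nonneg (by linarith)]
    have hzc : z ∈ Ωᶜ := by
      intro hzΩ
      have := hR hzΩ
      rw [Metric.mem_closedBall, dist_zero_right, hz] at this
      linarith
    calc Metric.infDist x Ωᶜ ≤ dist x z := Metric.infDist_le_dist_of_mem hzc
    _ ≤ ‖x‖ + ‖z‖ := by rw [dist_eq_norm]; exact norm_sub_le _ _
    _ ≤ 2*R+1 := by
        have hx' := hR hx
        rw [Metric.mem_closedBall, dist_zero_right] at hx'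
        rw [hz]; linarith
  -- measurability of the weight
  have hw_meas : Measurable (fun x : EuclideanSpace ℝ (Fin N) =>
      ENNReal.ofReal (Metric.infDist x Ωᶜ ^ (α/2))) :=
    ((Metric.continuous_infDist_pt Ωᶜ).rpow_const (fun x => Or.inr hβ0)).measurable.ennreal_ofReal
  set t : ℝ≥0∞ := ∫⁻ x in Θ, ENNReal.ofReal (Metric.infDist x Ωᶜ ^ (α/2)) with htdef
  -- t is finite
  have htfin : t ≠ ⊤ := by
    have h1 : t ≤ ENNReal.ofReal ((2*R+1) ^ (α/2)) * volume Θ := by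
      rw [htdef, ← setLIntegral_const]
      exact setLIntegral_mono' hΘm (fun x hx => ENNReal.ofReal_le_ofReal
        (Real.rpow_le_rpow Metric.infDist_nonneg (hD x (hΘΩ hx)) hβ0))
    have h2 : volume Θ ≠ ⊤ :=
      ((measure_mono (hΘΩ.trans hR)).trans_lt measure_closedBall_lt_top).ne
    exact (h1.trans_lt (ENNReal.mul_lt_top ENNReal.ofReal_lt_top (lt_top_iff_ne_top.2 h2))).ne
  -- pointwise bound
  have hptw : ∀ x : EuclideanSpace ℝ (Fin N),
      ENNReal.ofReal
        (min (‖x - y‖ ^ ((2 : ℝ) - N))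
            ((Metric.infDist x Ωᶜ) ^ (α / 2) * (Metric.infDist y Ωᶜ) ^ (α / 2)
              * ‖x - y‖ ^ ((2 : ℝ) - N - α))
          * (Metric.infDist x Ωᶜ) ^ (α / 2)) ≤
      ENNReal.ofReal (4 * (Metric.infDist y Ωᶜ) ^ (α/2)) *
        ENNReal.ofReal
          (min (‖x - y‖ ^ ((2:ℝ)-N))
            ((Metric.infDist x Ωᶜ) ^ (α/2) * ‖x - y‖ ^ ((2:ℝ)-N-α/2))) := by
    intro x
    rw [← ENNReal.ofReal_mul (mul_nonneg (by norm_num)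
      (Real.rpow_nonneg Metric.infDist_nonneg _))]
    refine ENNReal.ofReal_le_ofReal ?_
    exact aux_pointwise hN hα1 hα2 Metric.infDist_nonneg
      Metric.infDist_nonneg (norm_nonneg (x - y))
      (by rw [← dist_eq_norm]
          exact Metric.infDist_le_infDist_add_dist (x := x) (y := y) (s := Ωᶜ))
  set g : EuclideanSpace ℝ (Fin N) → ℝ≥0∞ := fun x =>
    ENNReal.ofReal
      (min (‖x - y‖ ^ ((2:ℝ)-N))
        ((Metric.infDist x Ωᶜ) ^ (α/2) * ‖x - y‖ ^ ((2:ℝ)-N-α/2))) with hgdef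
  have hstep1 : (∫⁻ x in Θ,
      ENNReal.ofReal
        (min (‖x - y‖ ^ ((2 : ℝ) - N))
            ((Metric.infDist x Ωᶜ) ^ (α / 2) * (Metric.infDist y Ωᶜ) ^ (α / 2)
              * ‖x - y‖ ^ ((2 : ℝ) - N - α))
          * (Metric.infDist x Ωᶜ) ^ (α / 2))) ≤
      ENNReal.ofReal (4 * (Metric.infDist y Ωᶜ) ^ (α/2)) * ∫⁻ x in Θ, g x := by
    rw [← lintegral_const_mul' _ _ ENNReal.ofReal_ne_top]
    exact lintegral_mono hptw
  rcases eq_or_ne t 0 with ht0 | ht0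
  · -- degenerate case: the weight vanishes a.e. on Θ
    have hae : ∀ᵐ x ∂(volume.restrict Θ),
        ENNReal.ofReal (Metric.infDist x Ωᶜ ^ (α/2)) = 0 := by
      exact (lintegral_eq_zero_iff hw_meas).1 ht0
    have hzero : (∫⁻ x in Θ,
        ENNReal.ofReal
          (min (‖x - y‖ ^ ((2 : ℝ) - N))
              ((Metric.infDist x Ωᶜ) ^ (α / 2) * (Metric.infDist y Ωᶜ) ^ (α / 2)
                * ‖x - y‖ ^ ((2 : ℝ) - N - α))
            * (Metric.infDist x Ωᶜ) ^ (α / 2))) = 0 := by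
      rw [← lintegral_zero (μ := volume.restrict Θ)]
      refine lintegral_congr_ae (hae.mono fun x hx => ?_)
      rw [ENNReal.ofReal_eq_zero] at hx
      have hnn : 0 ≤ Metric.infDist x Ωᶜ ^ (α/2) := Real.rpow_nonneg Metric.infDist_nonneg _
      have hw0 : Metric.infDist x Ωᶜ ^ (α/2) = 0 := le_antisymm hx hnn
      simp [hw0]
    rw [hzero]
    exact zero_le
  · -- main case
    set τ : ℝ := t.toReal with hτdef
    have hτpos : 0 < τ := ENNReal.toReal_pos ht0 htfin
    have hNβ : 0 < (N:ℝ) + α/2 := by linarith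
    set ρ : ℝ := τ ^ (((N:ℝ) + α/2)⁻¹) with hρdef
    have hρpos : 0 < ρ := Real.rpow_pos_of_pos hτpos _
    have hnear : (∫⁻ x in Θ ∩ Metric.ball y ρ, g x) ≤ ENNReal.ofReal (c₁ * ρ ^ (2:ℝ)) := by
      calc (∫⁻ x in Θ ∩ Metric.ball y ρ, g x)
          ≤ ∫⁻ x in Θ ∩ Metric.ball y ρ, ENNReal.ofReal (‖x - y‖ ^ ((2:ℝ)-N)) :=
            lintegral_mono fun x => ENNReal.ofReal_le_ofReal (min_le_left _ _)
      _ ≤ ∫⁻ x in Metric.ball y ρ, ENNReal.ofReal (‖x - y‖ ^ ((2:ℝ)-N)) :=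
            lintegral_mono_set Set.inter_subset_right
      _ ≤ ENNReal.ofReal (c₁ * ρ ^ (2:ℝ)) := hball y ρ hρpos.le
    have hfar : (∫⁻ x in Θ \ Metric.ball y ρ, g x) ≤
        ENNReal.ofReal (ρ ^ ((2:ℝ)-N-α/2)) * t := by
      have hbd : ∀ x ∈ Θ \ Metric.ball y ρ, g x ≤
          ENNReal.ofReal (ρ ^ ((2:ℝ)-N-α/2)) *
            ENNReal.ofReal (Metric.infDist x Ωᶜ ^ (α/2)) := by
        intro x hx
        have hge : ρ ≤ ‖x - y‖ := by
          have := hx.2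
          rw [Metric.mem_ball, not_lt, dist_eq_norm] at this
          exact this
        have h1 : ‖x - y‖ ^ ((2:ℝ)-N-α/2) ≤ ρ ^ ((2:ℝ)-N-α/2) :=
          Real.rpow_le_rpow_of_nonpos hρpos hge (by linarith)
        calc g x ≤ ENNReal.ofReal ((Metric.infDist x Ωᶜ) ^ (α/2) * ‖x - y‖ ^ ((2:ℝ)-N-α/2)) :=
              ENNReal.ofReal_le_ofReal (min_le_right _ _)
        _ ≤ ENNReal.ofReal ((Metric.infDist x Ωᶜ) ^ (α/2) * ρ ^ ((2:ℝ)-N-α/2)) :=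
              ENNReal.ofReal_le_ofReal (mul_le_mul_of_nonneg_left h1
                (Real.rpow_nonneg Metric.infDist_nonneg _))
        _ = ENNReal.ofReal (ρ ^ ((2:ℝ)-N-α/2)) *
              ENNReal.ofReal (Metric.infDist x Ωᶜ ^ (α/2)) := by
              rw [mul_comm, ENNReal.ofReal_mul (Real.rpow_nonneg hρpos.le _)]
      calc (∫⁻ x in Θ \ Metric.ball y ρ, g x)
          ≤ ∫⁻ x in Θ \ Metric.ball y ρ, ENNReal.ofReal (ρ ^ ((2:ℝ)-N-α/2)) *
              ENNReal.ofReal (Metric.infDist x Ωᶜ ^ (α/2)) :=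
            setLIntegral_mono' (hΘm.diff measurableSet_ball) hbd
      _ = ENNReal.ofReal (ρ ^ ((2:ℝ)-N-α/2)) *
              ∫⁻ x in Θ \ Metric.ball y ρ, ENNReal.ofReal (Metric.infDist x Ωᶜ ^ (α/2)) :=
            lintegral_const_mul' _ _ ENNReal.ofReal_ne_top
      _ ≤ ENNReal.ofReal (ρ ^ ((2:ℝ)-N-α/2)) * t :=
            mul_le_mul_right (lintegral_mono_set Set.diff_subset) _
    have hJ : (∫⁻ x in Θ, g x) ≤ ENNReal.ofReal ((c₁+1) * τ ^ (2/((N:ℝ)+α/2))) := by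
      have hsplit : (∫⁻ x in Θ, g x) ≤
          (∫⁻ x in Θ ∩ Metric.ball y ρ, g x) + ∫⁻ x in Θ \ Metric.ball y ρ, g x := by
        refine le_trans (le_of_eq ?_) (lintegral_union_le _ _ _)
        rw [Set.inter_union_diff]
      have ht' : t = ENNReal.ofReal τ := (ENNReal.ofReal_toReal htfin).symm
      have hre1 : ρ ^ (2:ℝ) = τ ^ (2/((N:ℝ)+α/2)) := by
        rw [hρdef, ← Real.rpow_mul hτpos.le]
        congr 1
        field_simp
      have hre2 : ρ ^ ((2:ℝ)-N-α/2) * τ = τ ^ (2/((N:ℝ)+α/2)) := by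
        rw [hρdef, ← Real.rpow_mul hτpos.le]
        nth_rewrite 2 [show τ = τ ^ (1:ℝ) from (Real.rpow_one τ).symm]
        rw [← Real.rpow_add hτpos]
        congr 1
        field_simp
        ring
      calc (∫⁻ x in Θ, g x) ≤
          (∫⁻ x in Θ ∩ Metric.ball y ρ, g x) + ∫⁻ x in Θ \ Metric.ball y ρ, g x := hsplit
      _ ≤ ENNReal.ofReal (c₁ * ρ ^ (2:ℝ)) + ENNReal.ofReal (ρ ^ ((2:ℝ)-N-α/2)) * t :=
            add_le_add hnear hfar
      _ = ENNReal.ofReal (c₁ * ρ ^ (2:ℝ)) + ENNReal.ofReal (ρ ^ ((2:ℝ)-N-α/2) * τ) := by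
            rw [ht', ← ENNReal.ofReal_mul (by positivity)]
      _ = ENNReal.ofReal (c₁ * ρ ^ (2:ℝ) + ρ ^ ((2:ℝ)-N-α/2) * τ) := by
            rw [← ENNReal.ofReal_add (by positivity) (by positivity)]
      _ = ENNReal.ofReal ((c₁+1) * τ ^ (2/((N:ℝ)+α/2))) := by
            rw [hre1, hre2]; congr 1; ring
    calc (∫⁻ x in Θ,
        ENNReal.ofReal
          (min (‖x - y‖ ^ ((2 : ℝ) - N))
              ((Metric.infDist x Ωᶜ) ^ (α / 2) * (Metric.infDist y Ωᶜ) ^ (α / 2)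
                * ‖x - y‖ ^ ((2 : ℝ) - N - α))
            * (Metric.infDist x Ωᶜ) ^ (α / 2))) ≤
        ENNReal.ofReal (4 * (Metric.infDist y Ωᶜ) ^ (α/2)) * ∫⁻ x in Θ, g x := hstep1
    _ ≤ ENNReal.ofReal (4 * (Metric.infDist y Ωᶜ) ^ (α/2)) *
          ENNReal.ofReal ((c₁+1) * τ ^ (2/((N:ℝ)+α/2))) := mul_le_mul_right hJ _
    _ = ENNReal.ofReal (4*(c₁+1) * (Metric.infDist y Ωᶜ) ^ (α/2)) *
          ENNReal.ofReal (τ ^ (2/((N:ℝ)+α/2))) := by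
        rw [← ENNReal.ofReal_mul (mul_nonneg (by norm_num)
          (Real.rpow_nonneg Metric.infDist_nonneg _)),
          ← ENNReal.ofReal_mul (mul_nonneg (by positivity)
          (Real.rpow_nonneg Metric.infDist_nonneg _))]
        congr 1
        ring
    _ = ENNReal.ofReal (4*(c₁+1) * (Metric.infDist y Ωᶜ) ^ (α/2)) * t ^ (2/((N:ℝ)+α/2)) := by
        rw [← ENNReal.ofReal_rpow_of_nonneg hτpos.le (by positivity),
          ENNReal.ofReal_toReal htfin]
end

section
/- Let N ≥ 2, let Ω ⊂ ℝ^N be a bounded open set, let 0 < κ ≤ 1/4 and set α = α₊ = 1 + √(1 − 4κ). For a finite positive Borel measure μ supported on ∂Ω define K̃[μ](x) = ∫_{∂Ω} d(x)^{α/2}·|x − ξ|^{−(N + α − 2)} dμ(ξ) for x ∈ Ω. Then there exists a constant c > 0, depending only on N, κ and the diameter of Ω, such that for every such μ and every s > 0 one has ∫_{{x ∈ Ω : K̃[μ](x) > s}} d(x)^{α/2} dx ≤ c·(μ(∂Ω)/s)^{(N + α/2)/(N − 2 + α/2)}. -/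
open MeasureTheory Set Metric
open scoped ENNReal
set_option maxHeartbeats 1000000

/-- the weak Marcinkiewicz-type estimate for the Poisson-type potential
`K̃[μ](x) = ∫_{∂Ω} d(x)^{α/2} |x-ξ|^{-(N+α-2)} dμ(ξ)` of a finite positive measure
`μ` supported on `∂Ω`:
`∫_{{K̃[μ] > s}} d^{α/2} dx ≤ c (μ(∂Ω)/s)^{(N+α/2)/(N-2+α/2)}`. -/
theorem stmt_12 {N : ℕ} (hN : 2 ≤ N)
    (Ω : Set (EuclideanSpace ℝ (Fin N))) (hΩo : IsOpen Ω) (hΩb : Bornology.IsBounded Ω)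
    (κ α : ℝ) (hκ0 : 0 < κ) (hκ1 : κ ≤ 1 / 4)
    (hα : α = 1 + Real.sqrt (1 - 4 * κ)) :
    ∃ c : ℝ, 0 < c ∧
      ∀ μ : Measure (EuclideanSpace ℝ (Fin N)), IsFiniteMeasure μ →
        μ (frontier Ω)ᶜ = 0 →
        ∀ s : ℝ, 0 < s →
          ∫⁻ x in {x | x ∈ Ω ∧ s <
              ∫ ξ in frontier Ω,
                (Metric.infDist x Ωᶜ) ^ (α / 2) * ‖x - ξ‖ ^ (-((N : ℝ) + α - 2)) ∂μ},
            ENNReal.ofReal ((Metric.infDist x Ωᶜ) ^ (α / 2)) ≤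
          ENNReal.ofReal
            (c * ((μ (frontier Ω)).toReal / s)
              ^ (((N : ℝ) + α / 2) / ((N : ℝ) - 2 + α / 2))) := by
  classical
  have hNR : (2 : ℝ) ≤ (N : ℝ) := by exact_mod_cast hN
  have hsqnn := Real.sqrt_nonneg (1 - 4 * κ)
  have hα1 : 1 ≤ α := by rw [hα]; linarith
  have hsq1 : Real.sqrt (1 - 4 * κ) < 1 := by
    nlinarith [Real.sq_sqrt (show (0:ℝ) ≤ 1 - 4 * κ by linarith)]
  have hα2 : α < 2 := by rw [hα]; linarith
  have hα0 : 0 < α := by linarith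
  set pe : ℝ := ((N : ℝ) + α / 2) / ((N : ℝ) - 2 + α / 2) with hpedef
  have hβ : 0 < (N : ℝ) - 2 + α / 2 := by linarith
  have hβ' : ((N : ℝ) - 2 + α / 2) ≠ 0 := ne_of_gt hβ
  have hpe1 : 1 < pe := (one_lt_div hβ).mpr (by linarith)
  have hpe0 : 0 < pe := lt_trans one_pos hpe1
  haveI : Nontrivial (EuclideanSpace ℝ (Fin N)) := by
    refine ⟨EuclideanSpace.single ⟨0, by omega⟩ 1, 0, fun h => ?_⟩
    have := congrArg (fun v : EuclideanSpace ℝ (Fin N) => v (⟨0, by omega⟩ : Fin N)) h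
    simp [EuclideanSpace.single_apply] at this
  set B : ℝ≥0∞ := volume (Metric.ball (0 : EuclideanSpace ℝ (Fin N)) 1) with hBdef
  have hBtop : B ≠ ⊤ := measure_ball_lt_top.ne
  set Cq : ℝ := 1 + 1 / (pe - 1) with hCqdef
  have hCq0 : 0 < Cq := by
    have : 0 < pe - 1 := by linarith
    positivity
  refine ⟨max 1 (B.toReal * Cq * 2 ^ pe), lt_max_iff.mpr (Or.inl one_pos), ?_⟩
  intro μ hμfin hμc s hs
  have hA : MeasurableSet (frontier Ω) := isClosed_frontier.measurableSet
  rcases eq_or_ne (μ (frontier Ω)) 0 with h0 | h0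
  · -- trivial case : μ vanishes on the boundary
    have hres : μ.restrict (frontier Ω) = 0 := Measure.restrict_eq_zero.mpr h0
    have hS : {x | x ∈ Ω ∧ s <
        ∫ ξ in frontier Ω,
          (Metric.infDist x Ωᶜ) ^ (α / 2) * ‖x - ξ‖ ^ (-((N : ℝ) + α - 2)) ∂μ} = (∅ : Set _) := by
      ext x
      simp only [mem_setOf_eq, mem_empty_iff_false, iff_false, not_and]
      intro _
      rw [hres, integral_zero_measure]
      exact not_lt.mpr hs.le
    rw [hS]
    simp
  · -- main case
    have hμA_lt : μ (frontier Ω) < ⊤ := measure_lt_top μ _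
    set M : ℝ := (μ (frontier Ω)).toReal with hMdef
    have hM0 : 0 < M := ENNReal.toReal_pos h0 hμA_lt.ne
    have hμA : μ (frontier Ω) = ENNReal.ofReal M := (ENNReal.ofReal_toReal hμA_lt.ne).symm
    set t : ℝ := s / (2 * M) with htdef
    have ht : 0 < t := by positivity
    haveI hfin' : IsFiniteMeasure (μ.restrict (frontier Ω)) :=
      ⟨by rw [Measure.restrict_apply_univ]; exact hμA_lt⟩
    -- measurability
    have hdmeas : Measurable (fun x : EuclideanSpace ℝ (Fin N) => Metric.infDist x Ωᶜ) :=
      (continuous_infDist_pt _).measurable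
    have hgmeas : Measurable (fun p : (EuclideanSpace ℝ (Fin N)) × (EuclideanSpace ℝ (Fin N)) =>
        Metric.infDist p.1 Ωᶜ ^ (α / 2) * ‖p.1 - p.2‖ ^ (-((N : ℝ) + α - 2))) := by
      have h1 : Measurable (fun p : (EuclideanSpace ℝ (Fin N)) × (EuclideanSpace ℝ (Fin N)) =>
        Metric.infDist p.1 Ωᶜ) := hdmeas.comp measurable_fst
      have h2 : Measurable (fun p : (EuclideanSpace ℝ (Fin N)) × (EuclideanSpace ℝ (Fin N)) =>
        ‖p.1 - p.2‖) := (continuous_fst.sub continuous_snd).norm.measurable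
      fun_prop
    have hgnn : ∀ x ξ : EuclideanSpace ℝ (Fin N),
        0 ≤ Metric.infDist x Ωᶜ ^ (α / 2) * ‖x - ξ‖ ^ (-((N : ℝ) + α - 2)) :=
      fun x ξ => mul_nonneg (Real.rpow_nonneg Metric.infDist_nonneg _)
        (Real.rpow_nonneg (norm_nonneg _) _)
    have hwmeas : Measurable (fun x : EuclideanSpace ℝ (Fin N) =>
        ENNReal.ofReal (Metric.infDist x Ωᶜ ^ (α / 2))) := by fun_prop
    set ν : Measure (EuclideanSpace ℝ (Fin N)) :=
      (volume.restrict Ω).withDensity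
        (fun x => ENNReal.ofReal (Metric.infDist x Ωᶜ ^ (α / 2))) with hνdef
    have hFmeas : StronglyMeasurable (fun x : EuclideanSpace ℝ (Fin N) =>
        ∫ ξ in frontier Ω,
          Metric.infDist x Ωᶜ ^ (α / 2) * ‖x - ξ‖ ^ (-((N : ℝ) + α - 2)) ∂μ) :=
      hgmeas.stronglyMeasurable.integral_prod_right'
    set S : Set (EuclideanSpace ℝ (Fin N)) := {x | x ∈ Ω ∧ s <
        ∫ ξ in frontier Ω,
          (Metric.infDist x Ωᶜ) ^ (α / 2) * ‖x - ξ‖ ^ (-((N : ℝ) + α - 2)) ∂μ} with hSdef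
    have hSmeas : MeasurableSet S :=
      MeasurableSet.inter hΩo.measurableSet
        (measurableSet_lt measurable_const hFmeas.measurable)
    have hSsub : S ⊆ Ω := fun x hx => hx.1
    have hLHS : (∫⁻ x in S, ENNReal.ofReal (Metric.infDist x Ωᶜ ^ (α / 2))) = ν S := by
      rw [hνdef, withDensity_apply _ hSmeas, Measure.restrict_restrict hSmeas,
        inter_eq_self_of_subset_left hSsub]
    -- the truncated potential
    set T : EuclideanSpace ℝ (Fin N) → ℝ≥0∞ := fun x =>
      ∫⁻ ξ in frontier Ω,
        (ENNReal.ofReal (Metric.infDist x Ωᶜ ^ (α / 2) * ‖x - ξ‖ ^ (-((N : ℝ) + α - 2)))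
          - ENNReal.ofReal t) ∂μ with hTdef
    have hTmeas : Measurable T := by
      apply Measurable.lintegral_prod_right (f := fun x ξ =>
        ENNReal.ofReal (Metric.infDist x Ωᶜ ^ (α / 2) * ‖x - ξ‖ ^ (-((N : ℝ) + α - 2)))
          - ENNReal.ofReal t)
      exact hgmeas.ennreal_ofReal.sub measurable_const
    have hkey : ∀ x ∈ S, ENNReal.ofReal (s / 2) < T x := by
      intro x hx
      obtain ⟨hxΩ, hxF⟩ := hx
      have hint : Integrable
          (fun ξ => Metric.infDist x Ωᶜ ^ (α / 2) * ‖x - ξ‖ ^ (-((N : ℝ) + α - 2)))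
          (μ.restrict (frontier Ω)) := by
        by_contra hni
        rw [integral_undef hni] at hxF
        exact absurd hxF (not_lt.mpr hs.le)
      have hG : ENNReal.ofReal (∫ ξ in frontier Ω,
            Metric.infDist x Ωᶜ ^ (α / 2) * ‖x - ξ‖ ^ (-((N : ℝ) + α - 2)) ∂μ)
          = ∫⁻ ξ in frontier Ω,
              ENNReal.ofReal (Metric.infDist x Ωᶜ ^ (α / 2)
                * ‖x - ξ‖ ^ (-((N : ℝ) + α - 2))) ∂μ :=
        ofReal_integral_eq_lintegral_ofReal hint (Filter.Eventually.of_forall (hgnn x))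
      have hsG : ENNReal.ofReal s < ∫⁻ ξ in frontier Ω,
          ENNReal.ofReal (Metric.infDist x Ωᶜ ^ (α / 2)
            * ‖x - ξ‖ ^ (-((N : ℝ) + α - 2))) ∂μ := by
        rw [← hG]
        exact (ENNReal.ofReal_lt_ofReal_iff_of_nonneg hs.le).mpr hxF
      have hgxmeas : Measurable (fun ξ : EuclideanSpace ℝ (Fin N) =>
          ENNReal.ofReal (Metric.infDist x Ωᶜ ^ (α / 2)
            * ‖x - ξ‖ ^ (-((N : ℝ) + α - 2)))) :=
        (hgmeas.comp measurable_prodMk_left).ennreal_ofReal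
      have hptw : ∀ ξ : EuclideanSpace ℝ (Fin N),
          ENNReal.ofReal (Metric.infDist x Ωᶜ ^ (α / 2) * ‖x - ξ‖ ^ (-((N : ℝ) + α - 2)))
          = min (ENNReal.ofReal (Metric.infDist x Ωᶜ ^ (α / 2)
              * ‖x - ξ‖ ^ (-((N : ℝ) + α - 2)))) (ENNReal.ofReal t)
            + (ENNReal.ofReal (Metric.infDist x Ωᶜ ^ (α / 2)
              * ‖x - ξ‖ ^ (-((N : ℝ) + α - 2))) - ENNReal.ofReal t) := by
        intro ξ
        rcases le_total (ENNReal.ofReal (Metric.infDist x Ωᶜ ^ (α / 2)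
            * ‖x - ξ‖ ^ (-((N : ℝ) + α - 2)))) (ENNReal.ofReal t) with h | h
        · rw [min_eq_left h, tsub_eq_zero_of_le h, add_zero]
        · rw [min_eq_right h, add_tsub_cancel_of_le h]
      have h1 : (∫⁻ ξ in frontier Ω,
            ENNReal.ofReal (Metric.infDist x Ωᶜ ^ (α / 2)
              * ‖x - ξ‖ ^ (-((N : ℝ) + α - 2))) ∂μ)
          ≤ ENNReal.ofReal (s / 2) + T x := by
        calc (∫⁻ ξ in frontier Ω,
              ENNReal.ofReal (Metric.infDist x Ωᶜ ^ (α / 2)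
                * ‖x - ξ‖ ^ (-((N : ℝ) + α - 2))) ∂μ)
            = ∫⁻ ξ in frontier Ω,
                (min (ENNReal.ofReal (Metric.infDist x Ωᶜ ^ (α / 2)
                  * ‖x - ξ‖ ^ (-((N : ℝ) + α - 2)))) (ENNReal.ofReal t)
                + (ENNReal.ofReal (Metric.infDist x Ωᶜ ^ (α / 2)
                  * ‖x - ξ‖ ^ (-((N : ℝ) + α - 2))) - ENNReal.ofReal t)) ∂μ :=
              lintegral_congr hptw
          _ = (∫⁻ ξ in frontier Ω,
                min (ENNReal.ofReal (Metric.infDist x Ωᶜ ^ (α / 2)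
                  * ‖x - ξ‖ ^ (-((N : ℝ) + α - 2)))) (ENNReal.ofReal t) ∂μ) + T x :=
              lintegral_add_left (hgxmeas.min measurable_const) _
          _ ≤ (∫⁻ _ in frontier Ω, ENNReal.ofReal t ∂μ) + T x :=
              add_le_add_left (lintegral_mono fun ξ => min_le_right _ _) _
          _ = ENNReal.ofReal t * μ (frontier Ω) + T x := by
              rw [lintegral_const, Measure.restrict_apply_univ]
          _ = ENNReal.ofReal (s / 2) + T x := by
              rw [hμA, ← ENNReal.ofReal_mul ht.le]
              congr 2
              rw [htdef]
              field_simp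
      have h3 : ENNReal.ofReal (s / 2) + ENNReal.ofReal (s / 2)
          < ENNReal.ofReal (s / 2) + T x := by
        refine lt_of_lt_of_le ?_ h1
        rw [← ENNReal.ofReal_add (by linarith) (by linarith), show s / 2 + s / 2 = s by ring]
        exact hsG
      exact (ENNReal.add_lt_add_iff_left ENNReal.ofReal_ne_top).mp h3
    have markov : ENNReal.ofReal (s / 2) * ν S ≤ ∫⁻ x, T x ∂ν := by
      calc ENNReal.ofReal (s / 2) * ν S
          ≤ ENNReal.ofReal (s / 2) * ν {x | ENNReal.ofReal (s / 2) ≤ T x} :=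
            mul_le_mul_right (measure_mono fun x hx => (hkey x hx).le) _
        _ ≤ ∫⁻ x, T x ∂ν := mul_meas_ge_le_lintegral₀ hTmeas.aemeasurable _
    have tonelli : (∫⁻ x, T x ∂ν) = ∫⁻ ξ in frontier Ω,
        (∫⁻ x, (ENNReal.ofReal (Metric.infDist x Ωᶜ ^ (α / 2) * ‖x - ξ‖ ^ (-((N : ℝ) + α - 2)))
          - ENNReal.ofReal t) ∂ν) ∂μ := by
      apply lintegral_lintegral_swap
      exact (hgmeas.ennreal_ofReal.sub measurable_const).aemeasurable
    -- pointwise kernel superlevel estimate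
    have lemA : ∀ ξ ∈ frontier Ω, ∀ u : ℝ, 0 < u →
        ν {x | u < Metric.infDist x Ωᶜ ^ (α / 2) * ‖x - ξ‖ ^ (-((N : ℝ) + α - 2))}
          ≤ B * ENNReal.ofReal (u ^ (-pe)) := by
      intro ξ hξ u hu
      have hξΩ : ξ ∉ Ω := by
        rw [hΩo.frontier_eq] at hξ; exact hξ.2
      have hξΩc : ξ ∈ Ωᶜ := hξΩ
      set ρ : ℝ := u ^ (-(1 / ((N : ℝ) - 2 + α / 2))) with hρdef
      have hρ : 0 < ρ := Real.rpow_pos_of_pos hu _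
      have hsub : ∀ x, u < Metric.infDist x Ωᶜ ^ (α / 2) * ‖x - ξ‖ ^ (-((N : ℝ) + α - 2)) →
          x ∈ Ω → Metric.infDist x Ωᶜ < ρ ∧ x ∈ Metric.ball ξ ρ := by
        intro x hxu hxΩ
        have hxξ : x ≠ ξ := fun h => hξΩ (h ▸ hxΩ)
        have hnorm : 0 < ‖x - ξ‖ := norm_pos_iff.mpr (sub_ne_zero.mpr hxξ)
        have hdle : Metric.infDist x Ωᶜ ≤ ‖x - ξ‖ := by
          rw [← dist_eq_norm]
          exact Metric.infDist_le_dist_of_mem hξΩc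
        have hgb : Metric.infDist x Ωᶜ ^ (α / 2) * ‖x - ξ‖ ^ (-((N : ℝ) + α - 2))
            ≤ ‖x - ξ‖ ^ (-((N : ℝ) - 2 + α / 2)) := by
          calc Metric.infDist x Ωᶜ ^ (α / 2) * ‖x - ξ‖ ^ (-((N : ℝ) + α - 2))
              ≤ ‖x - ξ‖ ^ (α / 2) * ‖x - ξ‖ ^ (-((N : ℝ) + α - 2)) :=
                mul_le_mul_of_nonneg_right
                  (Real.rpow_le_rpow Metric.infDist_nonneg hdle (by positivity))
                  (Real.rpow_nonneg (norm_nonneg _) _)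
            _ = ‖x - ξ‖ ^ (α / 2 + (-((N : ℝ) + α - 2))) := (Real.rpow_add hnorm _ _).symm
            _ = ‖x - ξ‖ ^ (-((N : ℝ) - 2 + α / 2)) := by
                rw [show α / 2 + (-((N : ℝ) + α - 2)) = -((N : ℝ) - 2 + α / 2) by ring]
        have hru : u < ‖x - ξ‖ ^ (-((N : ℝ) - 2 + α / 2)) := lt_of_lt_of_le hxu hgb
        have hlt : ‖x - ξ‖ < ρ := by
          have h5 := Real.rpow_lt_rpow_of_neg hu hru
            (show -(1 / ((N : ℝ) - 2 + α / 2)) < 0 from neg_lt_zero.mpr (by positivity))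
          rw [← Real.rpow_mul (norm_nonneg _),
            show -((N : ℝ) - 2 + α / 2) * -(1 / ((N : ℝ) - 2 + α / 2)) = 1 by rw [neg_mul_neg, mul_one_div, div_self hβ'],
            Real.rpow_one] at h5
          exact h5
        exact ⟨lt_of_le_of_lt hdle hlt, by rw [Metric.mem_ball, dist_eq_norm]; exact hlt⟩
      set U : Set (EuclideanSpace ℝ (Fin N)) :=
        {x | u < Metric.infDist x Ωᶜ ^ (α / 2) * ‖x - ξ‖ ^ (-((N : ℝ) + α - 2))} with hUdef
      have hgξ : Measurable fun x : EuclideanSpace ℝ (Fin N) =>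
          Metric.infDist x Ωᶜ ^ (α / 2) * ‖x - ξ‖ ^ (-((N : ℝ) + α - 2)) := by
        have h2 : Measurable fun x : EuclideanSpace ℝ (Fin N) => ‖x - ξ‖ :=
          (continuous_id.sub continuous_const).norm.measurable
        fun_prop
      have hmble : MeasurableSet U := measurableSet_lt measurable_const hgξ
      calc ν U
          = ∫⁻ x in U ∩ Ω, ENNReal.ofReal (Metric.infDist x Ωᶜ ^ (α / 2)) := by
            rw [hνdef, withDensity_apply _ hmble, Measure.restrict_restrict hmble]
        _ ≤ ∫⁻ _ in U ∩ Ω, ENNReal.ofReal (ρ ^ (α / 2)) := by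
            apply setLIntegral_mono' (hmble.inter hΩo.measurableSet)
            rintro x ⟨hx1, hx2⟩
            exact ENNReal.ofReal_le_ofReal
              (Real.rpow_le_rpow Metric.infDist_nonneg (hsub x hx1 hx2).1.le (by positivity))
        _ = ENNReal.ofReal (ρ ^ (α / 2)) * volume (U ∩ Ω) := setLIntegral_const _ _
        _ ≤ ENNReal.ofReal (ρ ^ (α / 2)) * volume (Metric.ball ξ ρ) :=
            mul_le_mul_right (measure_mono fun x hx => (hsub x hx.1 hx.2).2) _
        _ = ENNReal.ofReal (ρ ^ (α / 2)) * (ENNReal.ofReal (ρ ^ N) * B) := by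
            rw [Measure.addHaar_ball _ _ hρ.le, finrank_euclideanSpace_fin]
        _ = B * ENNReal.ofReal (u ^ (-pe)) := by
            rw [← mul_assoc, ← ENNReal.ofReal_mul (Real.rpow_nonneg hρ.le _), mul_comm]
            congr 1
            rw [← Real.rpow_natCast ρ N, ← Real.rpow_add hρ, hρdef, ← Real.rpow_mul hu.le,
              show -(1 / ((N : ℝ) - 2 + α / 2)) * (α / 2 + (N : ℝ)) = -pe by
                rw [hpedef, neg_mul, one_div_mul_eq_div, add_comm (α / 2) ((N : ℝ))]]
    -- the per-boundary-point integral estimate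
    have lemI : ∀ ξ ∈ frontier Ω,
        (∫⁻ x, (ENNReal.ofReal (Metric.infDist x Ωᶜ ^ (α / 2) * ‖x - ξ‖ ^ (-((N : ℝ) + α - 2)))
          - ENNReal.ofReal t) ∂ν) ≤ B * ENNReal.ofReal (Cq * t ^ (1 - pe)) := by
      intro ξ hξ
      have hgξ : Measurable fun x : EuclideanSpace ℝ (Fin N) =>
          Metric.infDist x Ωᶜ ^ (α / 2) * ‖x - ξ‖ ^ (-((N : ℝ) + α - 2)) := by
        have h2 : Measurable fun x : EuclideanSpace ℝ (Fin N) => ‖x - ξ‖ :=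
          (continuous_id.sub continuous_const).norm.measurable
        fun_prop
      have heq : ∀ x : EuclideanSpace ℝ (Fin N),
          ENNReal.ofReal (Metric.infDist x Ωᶜ ^ (α / 2) * ‖x - ξ‖ ^ (-((N : ℝ) + α - 2)))
            - ENNReal.ofReal t
          = ENNReal.ofReal
              (max (Metric.infDist x Ωᶜ ^ (α / 2) * ‖x - ξ‖ ^ (-((N : ℝ) + α - 2)) - t) 0) := by
        intro x
        rw [← ENNReal.ofReal_sub _ ht.le]
        rcases le_total
          (Metric.infDist x Ωᶜ ^ (α / 2) * ‖x - ξ‖ ^ (-((N : ℝ) + α - 2)) - t) 0 with h | h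
        · rw [max_eq_right h, ENNReal.ofReal_of_nonpos h,
            ENNReal.ofReal_zero]
        · rw [max_eq_left h]
      have hmax_meas : Measurable fun x : EuclideanSpace ℝ (Fin N) =>
          max (Metric.infDist x Ωᶜ ^ (α / 2) * ‖x - ξ‖ ^ (-((N : ℝ) + α - 2)) - t) 0 :=
        (hgξ.sub measurable_const).max measurable_const
      have hpe1' : pe - 1 ≠ 0 := ne_of_gt (by linarith)
      have hsplit : (∫⁻ τ in Set.Ioi (0:ℝ), ENNReal.ofReal ((t + τ) ^ (-pe)))
          ≤ ENNReal.ofReal (t ^ (1 - pe)) + ENNReal.ofReal (t ^ (1 - pe) / (pe - 1)) := by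
        rw [show Set.Ioi (0:ℝ) = Set.Ioc 0 t ∪ Set.Ioi t
          from (Set.Ioc_union_Ioi_eq_Ioi ht.le).symm]
        refine le_trans (lintegral_union_le _ _ _) (add_le_add ?_ ?_)
        · calc (∫⁻ τ in Set.Ioc (0:ℝ) t, ENNReal.ofReal ((t + τ) ^ (-pe)))
              ≤ ∫⁻ _ in Set.Ioc (0:ℝ) t, ENNReal.ofReal (t ^ (-pe)) := by
                apply setLIntegral_mono measurable_const
                intro τ hτ
                exact ENNReal.ofReal_le_ofReal
                  (Real.rpow_le_rpow_of_nonpos ht (by linarith [hτ.1]) (by linarith))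
            _ = ENNReal.ofReal (t ^ (-pe)) * volume (Set.Ioc (0:ℝ) t) := setLIntegral_const _ _
            _ = ENNReal.ofReal (t ^ (1 - pe)) := by
                rw [Real.volume_Ioc, sub_zero,
                  ← ENNReal.ofReal_mul (Real.rpow_nonneg ht.le _)]
                congr 1
                nth_rewrite 2 [← Real.rpow_one t]
                rw [← Real.rpow_add ht, show -pe + 1 = 1 - pe by ring]
        · have hpe' : -pe < -1 := by linarith
          have hint : IntegrableOn (fun τ : ℝ => τ ^ (-pe)) (Set.Ioi t) :=
            integrableOn_Ioi_rpow_of_lt hpe' ht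
          calc (∫⁻ τ in Set.Ioi t, ENNReal.ofReal ((t + τ) ^ (-pe)))
              ≤ ∫⁻ τ in Set.Ioi t, ENNReal.ofReal (τ ^ (-pe)) := by
                apply setLIntegral_mono (by fun_prop)
                intro τ hτ
                have hτt : t < τ := hτ
                exact ENNReal.ofReal_le_ofReal
                  (Real.rpow_le_rpow_of_nonpos (lt_trans ht hτt) (by linarith) (by linarith))
            _ = ENNReal.ofReal (∫ τ in Set.Ioi t, τ ^ (-pe)) :=
                (ofReal_integral_eq_lintegral_ofReal hint
                  ((ae_restrict_iff' measurableSet_Ioi).mpr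
                    (Filter.Eventually.of_forall fun τ hτ =>
                      Real.rpow_nonneg (le_of_lt (lt_trans ht hτ)) _))).symm
            _ = ENNReal.ofReal (t ^ (1 - pe) / (pe - 1)) := by
                rw [integral_Ioi_rpow_of_lt hpe' ht]
                congr 1
                rw [show -pe + 1 = 1 - pe by ring,
                  div_eq_div_iff (ne_of_lt (show (1:ℝ) - pe < 0 by linarith))
                    (ne_of_gt (show (0:ℝ) < pe - 1 by linarith))]
                ring
      calc (∫⁻ x, (ENNReal.ofReal
              (Metric.infDist x Ωᶜ ^ (α / 2) * ‖x - ξ‖ ^ (-((N : ℝ) + α - 2)))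
            - ENNReal.ofReal t) ∂ν)
          = ∫⁻ x, ENNReal.ofReal
              (max (Metric.infDist x Ωᶜ ^ (α / 2) * ‖x - ξ‖ ^ (-((N : ℝ) + α - 2)) - t) 0) ∂ν :=
            lintegral_congr heq
        _ = ∫⁻ τ in Set.Ioi (0:ℝ), ν {x | τ <
              max (Metric.infDist x Ωᶜ ^ (α / 2) * ‖x - ξ‖ ^ (-((N : ℝ) + α - 2)) - t) 0} :=
            lintegral_eq_lintegral_meas_lt ν
              (Filter.Eventually.of_forall fun x => le_max_right _ _) hmax_meas.aemeasurable
        _ ≤ ∫⁻ τ in Set.Ioi (0:ℝ), B * ENNReal.ofReal ((t + τ) ^ (-pe)) := by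
            apply setLIntegral_mono (by fun_prop)
            intro τ hτ
            have hτ0 : (0:ℝ) < τ := hτ
            have hset : {x | τ <
                max (Metric.infDist x Ωᶜ ^ (α / 2) * ‖x - ξ‖ ^ (-((N : ℝ) + α - 2)) - t) 0}
                = {x | t + τ <
                    Metric.infDist x Ωᶜ ^ (α / 2) * ‖x - ξ‖ ^ (-((N : ℝ) + α - 2))} := by
              ext x
              simp only [Set.mem_setOf_eq, lt_max_iff]
              constructor
              · rintro (h | h)
                · linarith
                · linarith
              · intro h; left; linarith
            rw [hset]
            exact lemA ξ hξ (t + τ) (by linarith)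
        _ = B * ∫⁻ τ in Set.Ioi (0:ℝ), ENNReal.ofReal ((t + τ) ^ (-pe)) :=
            lintegral_const_mul B (by fun_prop)
        _ ≤ B * ENNReal.ofReal (Cq * t ^ (1 - pe)) := by
            apply mul_le_mul_right
            refine le_trans hsplit (le_of_eq ?_)
            rw [← ENNReal.ofReal_add (Real.rpow_nonneg ht.le _)
              (div_nonneg (Real.rpow_nonneg ht.le _) (by linarith))]
            congr 1
            rw [hCqdef]
            field_simp
    have hFinal : (∫⁻ x, T x ∂ν) ≤ B * ENNReal.ofReal (Cq * t ^ (1 - pe)) * ENNReal.ofReal M := by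
      rw [tonelli]
      calc (∫⁻ ξ in frontier Ω, _ ∂μ)
          ≤ ∫⁻ _ in frontier Ω, B * ENNReal.ofReal (Cq * t ^ (1 - pe)) ∂μ :=
            setLIntegral_mono' hA lemI
        _ = B * ENNReal.ofReal (Cq * t ^ (1 - pe)) * μ (frontier Ω) := setLIntegral_const _ _
        _ = B * ENNReal.ofReal (Cq * t ^ (1 - pe)) * ENNReal.ofReal M := by rw [hμA]
    -- put everything together
    have hνS : ν S ≤ ENNReal.ofReal (B.toReal * (Cq * t ^ (1 - pe)) * M / (s / 2)) := by
      have h2 : ν S ≤ B * ENNReal.ofReal (Cq * t ^ (1 - pe)) * ENNReal.ofReal M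
          / ENNReal.ofReal (s / 2) := by
        rw [ENNReal.le_div_iff_mul_le
          (Or.inl (by simp [ENNReal.ofReal_eq_zero]; linarith)) (Or.inl ENNReal.ofReal_ne_top)]
        rw [mul_comm]
        exact le_trans markov hFinal
      have h3 : ENNReal.ofReal (B.toReal * (Cq * t ^ (1 - pe)) * M / (s / 2))
          = B * ENNReal.ofReal (Cq * t ^ (1 - pe)) * ENNReal.ofReal M
            / ENNReal.ofReal (s / 2) := by
        rw [ENNReal.ofReal_div_of_pos (by linarith : (0:ℝ) < s / 2),
          ENNReal.ofReal_mul (by positivity : (0:ℝ) ≤ B.toReal * (Cq * t ^ (1 - pe))),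
          ENNReal.ofReal_mul ENNReal.toReal_nonneg, ENNReal.ofReal_toReal hBtop]
      exact h3 ▸ h2
    have hreal : B.toReal * (Cq * t ^ (1 - pe)) * M / (s / 2)
        ≤ max 1 (B.toReal * Cq * 2 ^ pe) * (M / s) ^ pe := by
      have hM' : M ≠ 0 := ne_of_gt hM0
      have hs' : s ≠ 0 := ne_of_gt hs
      have hstep : t ^ (1 - pe) * (M / (s / 2)) = 2 ^ pe * (M / s) ^ pe := by
        have h1 : M / (s / 2) = t⁻¹ := by rw [htdef]; field_simp
        have h2 : t⁻¹ = 2 * (M / s) := by rw [htdef]; field_simp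
        rw [h1, ← Real.rpow_neg_one t, ← Real.rpow_add ht,
          show (1 - pe) + (-1) = -pe by ring, Real.rpow_neg ht.le, ← Real.inv_rpow ht.le,
          h2, Real.mul_rpow (by norm_num) (by positivity)]
      calc B.toReal * (Cq * t ^ (1 - pe)) * M / (s / 2)
          = (B.toReal * Cq) * (t ^ (1 - pe) * (M / (s / 2))) := by ring
        _ = (B.toReal * Cq * 2 ^ pe) * (M / s) ^ pe := by rw [hstep]; ring
        _ ≤ max 1 (B.toReal * Cq * 2 ^ pe) * (M / s) ^ pe :=
            mul_le_mul_of_nonneg_right (le_max_right _ _)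
              (Real.rpow_nonneg (by positivity) _)
    rw [hLHS]
    exact le_trans hνS (le_trans (ENNReal.ofReal_le_ofReal hreal) le_rfl)
end

section
/- Let N ≥ 2, let Ω ⊂ ℝ^N be a bounded convex open set, and suppose there is β₀ > 0 such that d is twice continuously differentiable on {x ∈ Ω : d(x) < β₀} with |∇d| = 1 there. Let 0 < κ < 1/4 and set α₋ = 1 − √(1 − 4κ). Let u be a continuous C² function on Ω satisfying Δu(x) + κ·u(x)/d(x)² ≥ 0 for every x ∈ Ω, and assume that for every ε > 0 there exists δ > 0 such that u(x) ≤ ε·d(x)^{α₋/2} whenever x ∈ Ω and d(x) < δ. Then u(x) ≤ 0 for every x ∈ Ω. -/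
open MeasureTheory

section AuxLemmas
open Set Metric

open Set

lemma second_diff_nonpos {ρ ρ' : ℝ → ℝ} {a r : ℝ} (hr : 0 < r)
    (hd : ∀ t ∈ Set.Ioo (-r) r, HasDerivAt ρ (ρ' t) t)
    (hd' : HasDerivAt ρ' a 0)
    (hmax : ∀ h ∈ Set.Ioo 0 r, ρ h + ρ (-h) - 2 * ρ 0 ≤ 0) : a ≤ 0 := by
  by_contra hpos
  push_neg at hpos
  set σ : ℝ → ℝ := fun t => ρ t + ρ (-t) - 2 * ρ 0 with hσdef
  set σ' : ℝ → ℝ := fun t => ρ' t - ρ' (-t) with hσ'def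
  have mem_neg : ∀ t ∈ Set.Ioo (-r) r, -t ∈ Set.Ioo (-r) r := by
    intro t ht; constructor <;> simp only [mem_Ioo] at ht <;> linarith [ht.1, ht.2]
  have hσ : ∀ t ∈ Set.Ioo (-r) r, HasDerivAt σ (σ' t) t := by
    intro t ht
    have h1 := hd t ht
    have h2 : HasDerivAt (fun s => ρ (-s)) (ρ' (-t) * (-1)) t :=
      (hd (-t) (mem_neg t ht)).comp t (hasDerivAt_neg t)
    have := (h1.add h2).sub_const (2 * ρ 0)
    convert this using 1
    · rfl
    · rfl
    · rfl
    simp [hσ'def]; ring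
  have hσ' : HasDerivAt σ' (2 * a) 0 := by
    have hd'' : HasDerivAt ρ' a (-(0:ℝ)) := by rw [neg_zero]; exact hd'
    have h2 : HasDerivAt (fun s => ρ' (-s)) (a * (-1)) 0 :=
      hd''.comp 0 (hasDerivAt_neg 0)
    have := hd'.sub h2
    convert this using 1
    · rfl
    · rfl
    · rfl
    ring
  have hσ'0 : σ' 0 = 0 := by simp [hσ'def]
  -- slope of σ' at 0 tends to 2a
  have hslope := hasDerivAt_iff_tendsto_slope.1 hσ'
  have hev : ∀ᶠ t in nhdsWithin 0 {(0:ℝ)}ᶜ, a < slope σ' 0 t :=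
    hslope.eventually (eventually_gt_nhds (by linarith))
  rw [eventually_nhdsWithin_iff, Metric.eventually_nhds_iff] at hev
  obtain ⟨ε, hε, hev⟩ := hev
  set c := min (ε / 2) (r / 2) with hc
  have hc0 : 0 < c := lt_min (by linarith) (by linarith)
  have hcr : c < r := lt_of_le_of_lt (min_le_right _ _) (by linarith)
  have hsub : Set.Icc (0:ℝ) c ⊆ Set.Ioo (-r) r := fun x hx =>
    ⟨by linarith [hx.1], lt_of_le_of_lt hx.2 hcr⟩
  have hmono : StrictMonoOn σ (Set.Icc 0 c) := by
    apply strictMonoOn_of_deriv_pos (convex_Icc 0 c)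
    · intro x hx
      exact ((hσ x (hsub hx)).continuousAt).continuousWithinAt
    · intro x hx
      rw [interior_Icc] at hx
      rw [(hσ x (hsub ⟨hx.1.le, hx.2.le⟩)).deriv]
      have hx0 : x ≠ 0 := ne_of_gt hx.1
      have hxε : dist x 0 < ε := by
        rw [Real.dist_eq, sub_zero, abs_of_pos hx.1]
        exact lt_of_lt_of_le hx.2 (le_trans (min_le_left _ _) (by linarith))
      have hs : a < σ' x / x := by
        simpa [slope_def_field, hσ'0] using hev hxε (by simpa using hx0)
      have h4 : a * x < σ' x := (lt_div_iff₀ hx.1).1 hs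
      nlinarith [hx.1]
  have h1 : σ 0 < σ c := hmono (left_mem_Icc.2 hc0.le) (right_mem_Icc.2 hc0.le) hc0
  have h2 : σ 0 = 0 := by simp [hσdef]; ring
  have h3 := hmax c ⟨hc0, hcr⟩
  rw [h2] at h1
  exact absurd h3 (not_le.2 h1)

open Set Metric

variable {E : Type*} [NormedAddCommGroup E] [NormedSpace ℝ E]

lemma mem_of_dist_lt_infDist {Ω : Set E} {x p : E} (h : dist x p < Metric.infDist x Ωᶜ) :
    p ∈ Ω := by
  by_contra hp
  exact absurd (Metric.infDist_le_dist_of_mem (s := Ωᶜ) hp) (not_le.2 h)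

lemma infDist_midpoint_concave {Ω : Set E} (hconv : Convex ℝ Ω) (hne : Ωᶜ.Nonempty)
    {x y : E} (hx : x ∈ Ω) (hy : y ∈ Ω) :
    (Metric.infDist x Ωᶜ + Metric.infDist y Ωᶜ) / 2
      ≤ Metric.infDist ((1/2 : ℝ) • x + (1/2 : ℝ) • y) Ωᶜ := by
  set dx := Metric.infDist x Ωᶜ with hdx
  set dy := Metric.infDist y Ωᶜ with hdy
  have hdx0 : 0 ≤ dx := Metric.infDist_nonneg
  have hdy0 : 0 ≤ dy := Metric.infDist_nonneg
  set z := (1/2 : ℝ) • x + (1/2 : ℝ) • y with hz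
  set R := (dx + dy) / 2 with hR
  rcases eq_or_lt_of_le (by linarith : (0:ℝ) ≤ R) with hR0 | hR0
  · rw [← hR0]; exact Metric.infDist_nonneg
  by_contra hlt
  push_neg at hlt
  obtain ⟨q, hqmem, hqd⟩ := (Metric.infDist_lt_iff hne).1 hlt
  have hnorm : ‖q - z‖ < R := by rwa [dist_eq_norm'] at hqd
  have hmem : ∀ (c : ℝ) (w : E), 0 ≤ c → c ≤ Metric.infDist w Ωᶜ → w ∈ Ω →
      w + (c / R) • (q - z) ∈ Ω := by
    intro c w hc hcle hw
    rcases eq_or_lt_of_le hc with hc0 | hc0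
    · rw [← hc0]; simpa using hw
    apply mem_of_dist_lt_infDist (x := w)
    rw [dist_eq_norm]
    have heq : ‖w - (w + (c / R) • (q - z))‖ = (c / R) * ‖q - z‖ := by
      rw [show w - (w + (c / R) • (q - z)) = -((c / R) • (q - z)) by abel]
      rw [norm_neg, norm_smul, Real.norm_eq_abs, abs_of_pos (div_pos hc0 hR0)]
    rw [heq]
    have hlt2 : (c / R) * ‖q - z‖ < c := by
      calc (c / R) * ‖q - z‖ < (c / R) * R :=
            mul_lt_mul_of_pos_left hnorm (div_pos hc0 hR0)
        _ = c := by field_simp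
    exact lt_of_lt_of_le hlt2 hcle
  have hp₁ : x + (dx / R) • (q - z) ∈ Ω := hmem dx x hdx0 le_rfl hx
  have hp₂ : y + (dy / R) • (q - z) ∈ Ω := hmem dy y hdy0 le_rfl hy
  have hcomb : (1/2 : ℝ) • (x + (dx / R) • (q - z)) + (1/2 : ℝ) • (y + (dy / R) • (q - z)) = q := by
    have hRne : R ≠ 0 := ne_of_gt hR0
    have hsum : 0 < dx + dy := by rw [hR] at hR0; linarith
    have hree : (1/2 : ℝ) * (dx / R) + (1/2) * (dy / R) = 1 := by
      rw [hR]; field_simp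
    calc (1/2 : ℝ) • (x + (dx / R) • (q - z)) + (1/2 : ℝ) • (y + (dy / R) • (q - z))
        = z + ((1/2 : ℝ) * (dx / R) + (1/2) * (dy / R)) • (q - z) := by
          rw [hz]; module
      _ = z + (1 : ℝ) • (q - z) := by rw [hree]
      _ = q := by module
  have : q ∈ Ω := by
    rw [← hcomb]
    exact hconv hp₁ hp₂ (by norm_num) (by norm_num) (by norm_num)
  exact hqmem this

open Set Metric

lemma rpow_pair_le {a : ℝ} (ha0 : 0 < a) (ha1 : a < 1) {p q m : ℝ}
    (hp : 0 ≤ p) (hq : 0 ≤ q) (h : p + q ≤ 2 * m) :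
    p ^ a + q ^ a ≤ 2 * m ^ a := by
  have hm : 0 ≤ m := by linarith
  have hcc := (Real.strictConcaveOn_rpow ha0 ha1).concaveOn
  have h2 := hcc.2 (mem_Ici.2 hp) (mem_Ici.2 hq)
      (by norm_num : (0:ℝ) ≤ 1/2) (by norm_num : (0:ℝ) ≤ 1/2) (by norm_num)
  simp only [smul_eq_mul] at h2
  have hmono : ((1/2 : ℝ) * p + (1/2) * q) ^ a ≤ m ^ a :=
    Real.rpow_le_rpow (by linarith) (by linarith) ha0.le
  linarith

lemma hasDerivAt_shift_rpow {c p t : ℝ} (h : 0 < c - t) :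
    HasDerivAt (fun s => (c - s) ^ p) (-(p * (c - t) ^ (p - 1))) t := by
  have h1 : HasDerivAt (fun s : ℝ => c - s) (-1) t := by
    simpa using (hasDerivAt_id t).const_sub c
  have h2 := Real.hasDerivAt_rpow_const (x := c - t) (p := p) (Or.inl (ne_of_gt h))
  have h3 := h2.comp t h1
  convert h3 using 1
  · rfl
  · rfl
  · rfl
  ring

variable {E : Type*} [NormedAddCommGroup E] [NormedSpace ℝ E]

lemma hasDerivAt_line (x₀ w : E) (t : ℝ) :
    HasDerivAt (fun s : ℝ => x₀ + s • w) w t := by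
  simpa using ((hasDerivAt_id t).smul_const w).const_add x₀

lemma hasDerivAt_comp_line {u : E → ℝ} {x₀ w : E} {t : ℝ}
    (hu : HasFDerivAt u (fderiv ℝ u (x₀ + t • w)) (x₀ + t • w)) :
    HasDerivAt (fun s => u (x₀ + s • w)) (fderiv ℝ u (x₀ + t • w) w) t :=
  hu.comp_hasDerivAt t (hasDerivAt_line x₀ w t)

lemma hasDerivAt_fderiv_line {u : E → ℝ} {x₀ w : E}
    (hdiff : DifferentiableAt ℝ (fderiv ℝ u) x₀) :
    HasDerivAt (fun s : ℝ => fderiv ℝ u (x₀ + s • w) w)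
      (fderiv ℝ (fderiv ℝ u) x₀ w w) 0 := by
  have h1 : HasFDerivAt (fderiv ℝ u) (fderiv ℝ (fderiv ℝ u) x₀) (x₀ + (0:ℝ) • w) := by
    simpa using hdiff.hasFDerivAt
  have h2 : HasDerivAt (fun s : ℝ => fderiv ℝ u (x₀ + s • w))
      (fderiv ℝ (fderiv ℝ u) x₀ w) 0 := h1.comp_hasDerivAt 0 (hasDerivAt_line x₀ w 0)
  have h3 := ((ContinuousLinearMap.apply ℝ ℝ w).hasFDerivAt).comp_hasDerivAt 0 h2
  exact h3

end AuxLemmas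

set_option maxHeartbeats 2000000 in
/-- maximum principle for the Hardy operator `-Δ - κ/d²` with `κ < 1/4`
in a bounded convex domain: a subsolution `u` with
`limsup_{d(x)→0} u(x)/d(x)^{α₋/2} ≤ 0` (uniformly) is nonpositive. -/
theorem stmt_13 {N : ℕ} (hN : 2 ≤ N)
    (Ω : Set (EuclideanSpace ℝ (Fin N))) (hΩo : IsOpen Ω) (hΩb : Bornology.IsBounded Ω)
    (hΩconv : Convex ℝ Ω)
    (β₀ : ℝ) (hβ₀ : 0 < β₀)
    (hdC : ContDiffOn ℝ 2 (fun x => Metric.infDist x Ωᶜ)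
      {x | x ∈ Ω ∧ Metric.infDist x Ωᶜ < β₀})
    (hgrad : ∀ x ∈ {x | x ∈ Ω ∧ Metric.infDist x Ωᶜ < β₀},
      ‖fderiv ℝ (fun y => Metric.infDist y Ωᶜ) x‖ = 1)
    (κ : ℝ) (hκ0 : 0 < κ) (hκ1 : κ < 1 / 4)
    (u : EuclideanSpace ℝ (Fin N) → ℝ) (huC : ContDiffOn ℝ 2 u Ω)
    (hsub : ∀ x ∈ Ω,
      0 ≤ laplacian u x + κ * u x / (Metric.infDist x Ωᶜ) ^ 2)
    (hbdry : ∀ ε : ℝ, 0 < ε → ∃ δ : ℝ, 0 < δ ∧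
      ∀ x ∈ Ω, Metric.infDist x Ωᶜ < δ →
        u x ≤ ε * (Metric.infDist x Ωᶜ) ^ ((1 - Real.sqrt (1 - 4 * κ)) / 2)) :
    ∀ x ∈ Ω, u x ≤ 0 := by
  intro x₁ hx₁
  by_contra hu1
  push_neg at hu1
  set d : EuclideanSpace ℝ (Fin N) → ℝ := fun x => Metric.infDist x Ωᶜ with hd_def
  set γ : ℝ := (1 - Real.sqrt (1 - 4 * κ)) / 2 with hγ_def
  have h4κ : (0:ℝ) ≤ 1 - 4 * κ := by linarith
  have hsq : Real.sqrt (1 - 4 * κ) ^ 2 = 1 - 4 * κ := Real.sq_sqrt h4κ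
  have hsqlt : Real.sqrt (1 - 4 * κ) < 1 := by
    nlinarith [Real.sqrt_nonneg (1 - 4 * κ)]
  have hsqpos : 0 < Real.sqrt (1 - 4 * κ) := Real.sqrt_pos.2 (by linarith)
  have hγ0 : 0 < γ := by rw [hγ_def]; linarith
  have hγ1 : γ < 1/2 := by rw [hγ_def]; linarith
  have hγκ : γ * (γ - 1) = -κ := by rw [hγ_def]; nlinarith [hsq]
  -- Ωᶜ is nonempty
  have hne : Ωᶜ.Nonempty := by
    rcases Set.eq_empty_or_nonempty Ωᶜ with hemp | hne
    · exfalso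
      have huniv : Ω = Set.univ := by
        rw [← Set.compl_empty_iff]; exact hemp
      obtain ⟨r, hr⟩ := hΩb.subset_ball 0
      set v : EuclideanSpace ℝ (Fin N) :=
        EuclideanSpace.single (⟨0, by omega⟩ : Fin N) (|r| + 1) with hv
      have hvmem : v ∈ Metric.ball 0 r := hr (by rw [huniv]; trivial)
      rw [Metric.mem_ball, dist_zero_right, hv, EuclideanSpace.norm_single] at hvmem
      rw [Real.norm_eq_abs, abs_of_pos (by positivity : (0:ℝ) < |r| + 1)] at hvmem
      nlinarith [le_abs_self r, abs_nonneg r]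
    · exact hne
  have hd_pos : ∀ x ∈ Ω, 0 < d x := by
    intro x hx
    obtain ⟨ε, hε, hball⟩ := Metric.isOpen_iff.1 hΩo x hx
    have : ¬ d x < ε := by
      intro hlt
      obtain ⟨q, hq, hqd⟩ := (Metric.infDist_lt_iff hne).1 hlt
      exact hq (hball (Metric.mem_ball'.2 hqd))
    linarith [not_lt.1 this, hε]
  -- the comparison function φ = d^γ + d^(1/2)
  set g : ℝ → ℝ := fun t => t ^ γ + t ^ (1/2 : ℝ) with hg_def
  set φ : EuclideanSpace ℝ (Fin N) → ℝ := fun x => g (d x) with hφ_def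
  have hφpos : ∀ x ∈ Ω, 0 < φ x := by
    intro x hx
    have h1 : 0 < d x ^ γ := Real.rpow_pos_of_pos (hd_pos x hx) γ
    have h2 : 0 ≤ d x ^ (1/2 : ℝ) := Real.rpow_nonneg Metric.infDist_nonneg _
    simp only [hφ_def, hg_def]; linarith
  have hφge : ∀ x, d x ^ γ ≤ φ x := by
    intro x
    have h2 : 0 ≤ d x ^ (1/2 : ℝ) := Real.rpow_nonneg Metric.infDist_nonneg _
    simp only [hφ_def, hg_def]; linarith
  set ε₀ : ℝ := u x₁ / φ x₁ with hε₀_def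
  have hε₀ : 0 < ε₀ := div_pos hu1 (hφpos x₁ hx₁)
  obtain ⟨δ, hδ0, hδ⟩ := hbdry (ε₀ / 2) (by positivity)
  have hδle : ∀ y ∈ Ω, d y < δ → u y ≤ (ε₀ / 2) * φ y := by
    intro y hy hyδ
    refine le_trans (hδ y hy hyδ) ?_
    exact mul_le_mul_of_nonneg_left (hφge y) (by positivity)
  have hx₁δ : δ ≤ d x₁ := by
    by_contra hlt
    push_neg at hlt
    have h1 := hδle x₁ hx₁ hlt
    have h2 : (ε₀ / 2) * φ x₁ = u x₁ / 2 := by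
      rw [hε₀_def]; field_simp [ne_of_gt (hφpos x₁ hx₁)]
    rw [h2] at h1; linarith
  -- compact set, maximum of u/φ
  set K : Set (EuclideanSpace ℝ (Fin N)) := {x | δ ≤ d x} ∩ closure Ω with hK_def
  have hKsub : K ⊆ Ω := by
    rintro x ⟨hx1, hx2⟩
    by_contra hx
    have : d x = 0 := Metric.infDist_zero_of_mem hx
    simp only [Set.mem_setOf_eq] at hx1
    linarith
  have hdcont : Continuous d := Metric.continuous_infDist_pt _
  have hKcomp : IsCompact K := by
    apply IsCompact.of_isClosed_subset hΩb.isCompact_closure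
    · exact ((isClosed_Ici.preimage hdcont).inter isClosed_closure)
    · exact Set.inter_subset_right
  have hφcont : ContinuousOn φ Ω := by
    apply ContinuousOn.add
    · exact ContinuousOn.rpow_const hdcont.continuousOn
        (fun x hx => Or.inl (ne_of_gt (hd_pos x hx)))
    · exact ContinuousOn.rpow_const hdcont.continuousOn
        (fun x hx => Or.inl (ne_of_gt (hd_pos x hx)))
  have hwcont : ContinuousOn (fun x => u x / φ x) K := by
    apply ContinuousOn.div ((huC.continuousOn).mono hKsub) (hφcont.mono hKsub)
    exact fun x hx => ne_of_gt (hφpos x (hKsub hx))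
  have hx₁K : x₁ ∈ K := ⟨hx₁δ, subset_closure hx₁⟩
  obtain ⟨x₀, hx₀K, hx₀max⟩ := hKcomp.exists_isMaxOn ⟨x₁, hx₁K⟩ hwcont
  set w₀ : ℝ := u x₀ / φ x₀ with hw₀_def
  have hx₀Ω : x₀ ∈ Ω := hKsub hx₀K
  have hw₀ : ε₀ ≤ w₀ := hx₀max hx₁K
  have hw₀pos : 0 < w₀ := lt_of_lt_of_le hε₀ hw₀
  set m : ℝ := d x₀ with hm_def
  have hm : 0 < m := hd_pos x₀ hx₀Ω
  have heq : u x₀ = w₀ * φ x₀ := by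
    rw [hw₀_def]; field_simp [ne_of_gt (hφpos x₀ hx₀Ω)]
  have hglob : ∀ y ∈ Ω, u y ≤ w₀ * φ y := by
    intro y hy
    rcases le_or_gt δ (d y) with hyδ | hyδ
    · have hyK : y ∈ K := ⟨hyδ, subset_closure hy⟩
      have := hx₀max hyK
      calc u y = (u y / φ y) * φ y := by field_simp [ne_of_gt (hφpos y hy)]
        _ ≤ w₀ * φ y := mul_le_mul_of_nonneg_right this (le_of_lt (hφpos y hy))
    · calc u y ≤ (ε₀ / 2) * φ y := hδle y hy hyδ
        _ ≤ w₀ * φ y := mul_le_mul_of_nonneg_right (by linarith) (le_of_lt (hφpos y hy))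
  -- nearest boundary point and unit direction ν
  obtain ⟨ξ, hξmem, hξd⟩ := (hΩo.isClosed_compl).exists_infDist_eq_dist hne x₀
  have hξd' : dist x₀ ξ = m := hξd.symm
  set ν : EuclideanSpace ℝ (Fin N) := m⁻¹ • (ξ - x₀) with hν_def
  have hξν : ξ - x₀ = m • ν := by
    rw [hν_def, smul_smul, mul_inv_cancel₀ (ne_of_gt hm), one_smul]
  have hνnorm : ‖ν‖ = 1 := by
    rw [hν_def, norm_smul, Real.norm_eq_abs, abs_of_pos (inv_pos.2 hm)]
    have : ‖ξ - x₀‖ = m := by rw [← dist_eq_norm']; exact hξd.symm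
    rw [this, inv_mul_cancel₀ (ne_of_gt hm)]
  -- distance decays exactly along ν
  have hdist : ∀ t : ℝ, |t| < m → d (x₀ + t • ν) ≤ m - t := by
    intro t ht
    have h1 : d (x₀ + t • ν) ≤ dist (x₀ + t • ν) ξ := Metric.infDist_le_dist_of_mem hξmem
    have h2 : dist (x₀ + t • ν) ξ = ‖(t - m) • ν‖ := by
      rw [dist_eq_norm]
      congr 1
      rw [sub_smul, ← hξν]
      abel
    rw [h2, norm_smul, Real.norm_eq_abs, hνnorm, mul_one] at h1
    have : |t - m| = m - t := by
      rw [abs_sub_comm, abs_of_pos (by cases abs_lt.1 ht; linarith)]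
    linarith [h1, this.le.trans (le_refl (m - t)), this ▸ h1]
  -- membership of points near x₀
  have hmemnear : ∀ (v : EuclideanSpace ℝ (Fin N)) (t : ℝ), |t| * ‖v‖ < m →
      x₀ + t • v ∈ Ω := by
    intro v t htv
    apply mem_of_dist_lt_infDist (x := x₀) (Ω := Ω)
    rw [dist_eq_norm, show x₀ - (x₀ + t • v) = -(t • v) by abel, norm_neg, norm_smul,
      Real.norm_eq_abs]
    exact htv
  -- derivative machinery
  have hudiff : DifferentiableOn ℝ u Ω := huC.differentiableOn (by norm_num)
  have hu' : ∀ y ∈ Ω, HasFDerivAt u (fderiv ℝ u y) y := fun y hy =>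
    ((hudiff y hy).differentiableAt (hΩo.mem_nhds hy)).hasFDerivAt
  have hfd : DifferentiableAt ℝ (fderiv ℝ u) x₀ := by
    have h2 : ContDiffOn ℝ 2 u Ω := huC
    have h3 : ContDiffOn ℝ ((1 : WithTop ℕ∞) + 1) u Ω := by
      rw [one_add_one_eq_two]; exact h2
    have h4 := ((contDiffOn_succ_iff_fderiv_of_isOpen (n := 1) hΩo).1 h3).2.2
    exact ((h4.differentiableOn one_ne_zero) x₀ hx₀Ω).differentiableAt (hΩo.mem_nhds hx₀Ω)
  set B := fderiv ℝ (fderiv ℝ u) x₀ with hB_def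
  -- generic second-difference bound
  have hBle : ∀ w : EuclideanSpace ℝ (Fin N),
      (∀ h : ℝ, 0 < h → h * (‖w‖ + 1) < m →
        u (x₀ + h • w) + u (x₀ - h • w) - 2 * u x₀ ≤ 0) → B w w ≤ 0 := by
    intro w hcomp
    set r : ℝ := m / (‖w‖ + 1) with hr_def
    have hw1 : (0:ℝ) < ‖w‖ + 1 := by positivity
    have hr : 0 < r := div_pos hm hw1
    have hmemt : ∀ t ∈ Set.Ioo (-r) r, x₀ + t • w ∈ Ω := by
      intro t ht
      apply hmemnear
      have htr : |t| < r := abs_lt.2 ⟨ht.1, ht.2⟩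
      calc |t| * ‖w‖ ≤ |t| * (‖w‖ + 1) := by
            apply mul_le_mul_of_nonneg_left (by linarith) (abs_nonneg t)
        _ < r * (‖w‖ + 1) := by apply mul_lt_mul_of_pos_right htr hw1
        _ = m := by rw [hr_def]; field_simp
    apply second_diff_nonpos hr
      (ρ := fun t => u (x₀ + t • w)) (ρ' := fun t => fderiv ℝ u (x₀ + t • w) w)
    · intro t ht
      exact hasDerivAt_comp_line (hu' _ (hmemt t ht))
    · exact hasDerivAt_fderiv_line hfd
    · intro h hh
      have h1 : h * (‖w‖ + 1) < m := by
        have : h < r := hh.2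
        calc h * (‖w‖ + 1) < r * (‖w‖ + 1) := mul_lt_mul_of_pos_right this hw1
          _ = m := by rw [hr_def]; field_simp
      have h2 := hcomp h hh.1 h1
      have e1 : x₀ + (-h) • w = x₀ - h • w := by module
      have e2 : x₀ + (0:ℝ) • w = x₀ := by module
      simp only [e1, e2]
      linarith
  -- every direction: B w w ≤ 0, by concavity of d and of g
  have hconc : ∀ w : EuclideanSpace ℝ (Fin N), B w w ≤ 0 := by
    intro w
    apply hBle w
    intro h hh0 hhm
    have hwlt : ∀ s : ℝ, |s| = h → x₀ + s • w ∈ Ω := by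
      intro s hs
      apply hmemnear
      rw [hs]
      calc h * ‖w‖ ≤ h * (‖w‖ + 1) := by nlinarith [norm_nonneg w]
        _ < m := hhm
    have hp : x₀ + h • w ∈ Ω := hwlt h (abs_of_pos hh0)
    have hq : x₀ + (-h) • w ∈ Ω := hwlt (-h) (by rw [abs_neg, abs_of_pos hh0])
    have hq' : x₀ - h • w ∈ Ω := by rwa [show x₀ + (-h) • w = x₀ - h • w by module] at hq
    have hmid : (1/2 : ℝ) • (x₀ + h • w) + (1/2 : ℝ) • (x₀ - h • w) = x₀ := by module
    have hdconc := infDist_midpoint_concave hΩconv hne hp hq'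
    rw [hmid] at hdconc
    -- d p + d q ≤ 2 m
    have hdd : d (x₀ + h • w) + d (x₀ - h • w) ≤ 2 * m := by
      have h9 : (d (x₀ + h • w) + d (x₀ - h • w)) / 2 ≤ m := hdconc
      linarith only [h9]
    have hγlt1 : γ < 1 := by linarith
    have hpair1 := rpow_pair_le hγ0 hγlt1 (Metric.infDist_nonneg (x := x₀ + h • w))
      (Metric.infDist_nonneg (x := x₀ - h • w)) hdd
    have hpair2 := rpow_pair_le (by norm_num : (0:ℝ) < 1/2) (by norm_num : (1:ℝ)/2 < 1)
      (Metric.infDist_nonneg (x := x₀ + h • w)) (Metric.infDist_nonneg (x := x₀ - h • w)) hdd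
    have hφsum : φ (x₀ + h • w) + φ (x₀ - h • w) ≤ 2 * φ x₀ := by
      simp only [hφ_def, hg_def]
      have hmx : d x₀ = m := rfl
      rw [hmx]
      linarith only [hpair1, hpair2]
    have hup := hglob _ hp
    have huq := hglob _ hq'
    have hmul : w₀ * (φ (x₀ + h • w) + φ (x₀ - h • w)) ≤ w₀ * (2 * φ x₀) :=
      mul_le_mul_of_nonneg_left hφsum (le_of_lt hw₀pos)
    have h2u : 2 * u x₀ = w₀ * (2 * φ x₀) := by rw [heq]; ring
    rw [mul_add] at hmul
    linarith only [hup, huq, hmul, h2u]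
  -- radial direction: sharper bound from the exact decay of d along ν
  have hrad : B ν ν ≤ w₀ * (γ * ((γ - 1) * m ^ (γ - 1 - 1))
      + (1/2) * ((1/2 - 1) * m ^ ((1/2 : ℝ) - 1 - 1))) := by
    have hm2 : 0 < m / 2 := by linarith
    have hsd := second_diff_nonpos (r := m / 2) hm2
      (ρ := fun t => u (x₀ + t • ν) - w₀ * ((m - t) ^ γ + (m - t) ^ (1/2 : ℝ)))
      (ρ' := fun t => fderiv ℝ u (x₀ + t • ν) ν
        - w₀ * (-(γ * (m - t) ^ (γ - 1)) + -((1/2) * (m - t) ^ ((1/2 : ℝ) - 1))))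
      (a := B ν ν - w₀ * (γ * ((γ - 1) * m ^ (γ - 1 - 1))
        + (1/2) * ((1/2 - 1) * m ^ ((1/2 : ℝ) - 1 - 1))))
    have key : B ν ν - w₀ * (γ * ((γ - 1) * m ^ (γ - 1 - 1))
        + (1/2) * ((1/2 - 1) * m ^ ((1/2 : ℝ) - 1 - 1))) ≤ 0 := by
      apply hsd
      · intro t ht
        have hmt : 0 < m - t := by cases ht; linarith
        have htm : |t| < m := by rw [abs_lt]; cases ht; constructor <;> linarith
        have htΩ : x₀ + t • ν ∈ Ω := by
          apply hmemnear; rw [hνnorm, mul_one]; exact htm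
        have h1 := hasDerivAt_comp_line (hu' _ htΩ)
        have h2 := (hasDerivAt_shift_rpow (c := m) (p := γ) hmt).add
          (hasDerivAt_shift_rpow (c := m) (p := (1/2 : ℝ)) hmt)
        have h3 := h2.const_mul w₀
        have h4 := h1.sub h3
        convert h4 using 1
        · rfl
        · rfl
        · rfl
      · have hm0 : (0:ℝ) < m - 0 := by simpa using hm
        have h1 := hasDerivAt_fderiv_line (w := ν) hfd
        have h2 := ((hasDerivAt_shift_rpow (c := m) (p := γ - 1) hm0).const_mul γ).neg
        have h3 := ((hasDerivAt_shift_rpow (c := m) (p := (1/2 : ℝ) - 1) hm0).const_mul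
          (1/2 : ℝ)).neg
        have h4 := ((h2.add h3).const_mul w₀)
        have h5 := h1.sub h4
        convert h5 using 1
        · rfl
        · rfl
        · rfl
        simp only [sub_zero]
        ring
      · intro h hh
        have hh0 : 0 < h := hh.1
        have hhm : h < m / 2 := hh.2
        have hb : ∀ t : ℝ, |t| < m →
            u (x₀ + t • ν) - w₀ * ((m - t) ^ γ + (m - t) ^ (1/2 : ℝ)) ≤ 0 := by
          intro t htm
          have htΩ : x₀ + t • ν ∈ Ω := by
            apply hmemnear; rw [hνnorm, mul_one]; exact htm
          have hdt := hdist t htm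
          have hmt : 0 ≤ m - t := le_trans Metric.infDist_nonneg hdt
          have hg1 : d (x₀ + t • ν) ^ γ ≤ (m - t) ^ γ :=
            Real.rpow_le_rpow Metric.infDist_nonneg hdt hγ0.le
          have hg2 : d (x₀ + t • ν) ^ (1/2 : ℝ) ≤ (m - t) ^ (1/2 : ℝ) :=
            Real.rpow_le_rpow Metric.infDist_nonneg hdt (by norm_num)
          have hu1 := hglob _ htΩ
          have hφt : φ (x₀ + t • ν) = d (x₀ + t • ν) ^ γ + d (x₀ + t • ν) ^ (1/2 : ℝ) := rfl
          rw [hφt] at hu1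
          have hmul2 := mul_le_mul_of_nonneg_left (add_le_add hg1 hg2) hw₀pos.le
          linarith only [hu1, hmul2]
        have hb1 := hb h (by rw [abs_of_pos hh0]; linarith)
        have hb2 := hb (-h) (by rw [abs_neg, abs_of_pos hh0]; linarith)
        have hb0 : u (x₀ + (0:ℝ) • ν) - w₀ * ((m - 0) ^ γ + (m - 0) ^ (1/2 : ℝ)) = 0 := by
          have e2 : x₀ + (0:ℝ) • ν = x₀ := by module
          rw [e2, sub_zero, heq]
          have hmx : φ x₀ = m ^ γ + m ^ (1/2 : ℝ) := rfl
          rw [hmx]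
          ring
        rw [hb0]
        linarith only [hb1, hb2]
    linarith only [key]
  -- decompose the Laplacian along ν and complementary directions
  set e : Fin N → EuclideanSpace ℝ (Fin N) := fun i => EuclideanSpace.single i (1:ℝ) with he_def
  have hLap : laplacian u x₀ = ∑ i, B (e i) (e i) := by
    simp only [laplacian, iteratedFDeriv_two_apply, hB_def, he_def,
      Matrix.cons_val_zero, Matrix.cons_val_one, Matrix.head_cons]
  have hsum_basis : ∑ i, ν i • e i = ν := by
    have h1 := (EuclideanSpace.basisFun (Fin N) ℝ).sum_repr ν
    simpa [EuclideanSpace.basisFun_apply, EuclideanSpace.basisFun_repr, he_def] using h1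
  have hnorm1 : ∑ i, ν i * ν i = 1 := by
    have h1 : (inner ℝ ν ν : ℝ) = 1 := by
      rw [real_inner_self_eq_norm_mul_norm, hνnorm]; norm_num
    rw [← h1, PiLp.inner_apply]
    simp [RCLike.inner_apply, sq]
  have hexpand : ∀ i, B (e i - ν i • ν) (e i - ν i • ν)
      = B (e i) (e i) - ν i * B (e i) ν - ν i * B ν (e i) + (ν i * ν i) * B ν ν := by
    intro i
    simp only [map_sub, _root_.map_smul, ContinuousLinearMap.sub_apply,
      ContinuousLinearMap.smul_apply, smul_eq_mul]
    ring
  have hsum1 : ∑ i, ν i * B (e i) ν = B ν ν := by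
    calc ∑ i, ν i * B (e i) ν = ∑ i, B (ν i • e i) ν := by
          refine Finset.sum_congr rfl fun i _ => ?_
          simp [_root_.map_smul]
      _ = B (∑ i, ν i • e i) ν := by rw [map_sum, ContinuousLinearMap.sum_apply]
      _ = B ν ν := by rw [hsum_basis]
  have hsum2 : ∑ i, ν i * B ν (e i) = B ν ν := by
    have h1 : (B ν) (∑ i, ν i • e i) = ∑ i, ν i * B ν (e i) := by
      rw [map_sum]
      exact Finset.sum_congr rfl fun i _ => by simp
    rw [← h1, hsum_basis]
  have hdecomp : laplacian u x₀ = B ν ν + ∑ i, B (e i - ν i • ν) (e i - ν i • ν) := by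
    rw [hLap]
    have h1 : ∑ i, B (e i - ν i • ν) (e i - ν i • ν)
        = ∑ i, (B (e i) (e i) - ν i * B (e i) ν - ν i * B ν (e i) + (ν i * ν i) * B ν ν) :=
      Finset.sum_congr rfl fun i _ => hexpand i
    rw [h1, Finset.sum_add_distrib, Finset.sum_sub_distrib, Finset.sum_sub_distrib,
      hsum1, hsum2, ← Finset.sum_mul, hnorm1]
    ring
  have hlap_le : laplacian u x₀ ≤ w₀ * (γ * ((γ - 1) * m ^ (γ - 2))
      + (1/2) * ((1/2 - 1) * m ^ ((1/2 : ℝ) - 2))) := by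
    rw [hdecomp]
    have hs : ∑ i, B (e i - ν i • ν) (e i - ν i • ν) ≤ 0 :=
      Finset.sum_nonpos (fun i _ => hconc (e i - ν i • ν))
    have hrad2 := hrad
    rw [show γ - 1 - 1 = γ - 2 by ring, show (1/2 : ℝ) - 1 - 1 = (1/2 : ℝ) - 2 by ring] at hrad2
    linarith only [hrad2, hs]
  -- final contradiction
  have hApos : 0 < m ^ (γ - 2) := Real.rpow_pos_of_pos hm _
  have hBppos : 0 < m ^ ((1/2 : ℝ) - 2) := Real.rpow_pos_of_pos hm _
  have hmx : φ x₀ = m ^ γ + m ^ (1/2 : ℝ) := rfl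
  have hux₀ : u x₀ = w₀ * (m ^ γ + m ^ (1/2 : ℝ)) := by rw [heq, hmx]
  have hpow2 : (m : ℝ) ^ (2:ℕ) = m ^ (2:ℝ) := (Real.rpow_natCast m 2).symm
  have he1 : m ^ (γ - 2) = m ^ γ / m ^ (2:ℕ) := by
    rw [hpow2, ← Real.rpow_sub hm]
  have he2 : m ^ ((1/2 : ℝ) - 2) = m ^ (1/2 : ℝ) / m ^ (2:ℕ) := by
    rw [hpow2, ← Real.rpow_sub hm]
  have hm2pos : (0:ℝ) < m ^ (2:ℕ) := by positivity
  have hκu : κ * u x₀ / m ^ (2:ℕ)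
      = κ * w₀ * (m ^ (γ - 2)) + κ * w₀ * (m ^ ((1/2 : ℝ) - 2)) := by
    rw [hux₀, he1, he2]
    field_simp
  have hx₀sub := hsub x₀ hx₀Ω
  have hdx₀ : Metric.infDist x₀ Ωᶜ = m := rfl
  rw [hdx₀, hκu] at hx₀sub
  have hlap_le2 : laplacian u x₀
      ≤ -(κ * (w₀ * m ^ (γ - 2))) - (1/4) * (w₀ * m ^ ((1/2 : ℝ) - 2)) := by
    have he3 : γ * ((γ - 1) * m ^ (γ - 2)) = -κ * m ^ (γ - 2) := by
      rw [← mul_assoc, hγκ]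
    have h9 := hlap_le
    rw [he3] at h9
    exact h9.trans_eq (by ring)
  have hneg : (κ - 1/4) * (w₀ * m ^ ((1/2 : ℝ) - 2)) < 0 :=
    mul_neg_of_neg_of_pos (by linarith) (mul_pos hw₀pos hBppos)
  have he6 : κ * w₀ * (m ^ (γ - 2)) - κ * (w₀ * m ^ (γ - 2)) = 0 := by ring
  have he7 : κ * w₀ * (m ^ ((1/2 : ℝ) - 2)) - (1/4) * (w₀ * m ^ ((1/2 : ℝ) - 2))
      = (κ - 1/4) * (w₀ * m ^ ((1/2 : ℝ) - 2)) := by ring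
  linarith only [hx₀sub, hlap_le2, hneg, he6, he7]
end
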